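/- arXiv:2304.07416 — 5 statements merged into one kernel-verified Lean document; each statement's English description precedes it below -/
import Mathlib

section
/- If K is an absolutely weakly compact or absolutely weakly sequentially compact subset of a separable Banach lattice E, then the absolute weak topology restricted to K is metrizable. -/
set_option linter.unusedSectionVars false

open Filter Topology Pointwise MeasureTheory


section Defs

variable {E : Type*} [NormedAddCommGroup E] [Lattice E] [HasSolidNorm E] [IsOrderedAddMonoid E] [NormedSpace ℝ E]

/-- The pseudometric on a Banach lattice induced by a positive continuous linear functional `f`,
given by `dist x y = f |x - y|`. -/
noncomputable def absSeminormDist (f : E →L[ℝ] ℝ) (hf : ∀ x : E, 0 ≤ x → 0 ≤ f x) :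
    PseudoMetricSpace E where
  dist x y := f |x - y|
  dist_self x := by simp
  dist_comm x y := by simp [abs_sub_comm]
  dist_triangle x y z := by
    have h1 : |x - z| ≤ |x - y| + |y - z| := by
      calc |x - z| = |(x - y) + (y - z)| := by abel_nf
      _ ≤ |x - y| + |y - z| := abs_add_le _ _
    have h2 := hf (|x - y| + |y - z| - |x - z|) (sub_nonneg.mpr h1)
    simp only [map_sub, map_add] at h2
    linarith

/-- The absolute weak topology `|σ|(E, E*)` on a Banach lattice `E`: the topology generated by
the lattice seminorms `x ↦ |x*|(|x|) = x*(|x|)`, for `x*` ranging over the positive continuous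
linear functionals on `E`. -/
noncomputable def absWeakTopology (E : Type*) [NormedAddCommGroup E] [Lattice E] [HasSolidNorm E] [IsOrderedAddMonoid E] [NormedSpace ℝ E] :
    TopologicalSpace E :=
  ⨅ f : {f : E →L[ℝ] ℝ // ∀ x : E, 0 ≤ x → 0 ≤ f x},
    (absSeminormDist f.1 f.2).toUniformSpace.toTopologicalSpace

end Defs


set_option linter.unusedSectionVars false
open HasSolidNorm

section Aux
variable {E : Type*} [NormedAddCommGroup E] [Lattice E] [HasSolidNorm E] [IsOrderedAddMonoid E] [NormedSpace ℝ E] [PosSMulStrictMono ℝ E] [PosSMulReflectLT ℝ E]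

private lemma norm_sup_zero_le (y : E) : ‖y ⊔ 0‖ ≤ ‖y‖ := by
  rw [← norm_abs_eq_norm y]
  apply solid
  rw [abs_of_nonneg (le_sup_right : (0:E) ≤ y ⊔ 0), abs_abs]
  exact sup_le (le_abs_self y) (abs_nonneg y)

private lemma exists_pos_norming (x : E) (hx : 0 ≤ x) :
    ∃ f : E →L[ℝ] ℝ, (∀ y, 0 ≤ y → 0 ≤ f y) ∧ (∀ y, |f y| ≤ ‖y‖) ∧ f x = ‖x‖ := by
  rcases eq_or_ne x 0 with rfl | hx0
  · exact ⟨0, fun y _ => le_rfl, by simp, by simp⟩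
  set N : E → ℝ := fun y => ‖y ⊔ 0‖ with hNdef
  have hN_hom : ∀ c : ℝ, 0 < c → ∀ y, N (c • y) = c * N y := by
    intro c hc y
    have h1 : c • (y ⊔ 0) = (c • y) ⊔ 0 := by
      have h := (OrderIso.smulRight (α := ℝ) (β := E) hc).map_sup y 0
      simp only [OrderIso.smulRight_apply, smul_zero] at h
      exact h
    simp only [N, ← h1, norm_smul, Real.norm_eq_abs, abs_of_pos hc]
  have hN_add : ∀ y z : E, N (y + z) ≤ N y + N z := by
    intro y z
    have h1 : (y + z) ⊔ 0 ≤ (y ⊔ 0) + (z ⊔ 0) :=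
      sup_le (add_le_add le_sup_left le_sup_left)
        (add_nonneg le_sup_right le_sup_right)
    have h2 : ‖(y + z) ⊔ 0‖ ≤ ‖(y ⊔ 0) + (z ⊔ 0)‖ := by
      apply solid
      rwa [abs_of_nonneg (le_sup_right : (0:E) ≤ (y+z) ⊔ 0),
        abs_of_nonneg (add_nonneg (le_sup_right : (0:E) ≤ y ⊔ 0) le_sup_right)]
    exact h2.trans (norm_add_le _ _)
  set e := LinearEquiv.toSpanNonzeroSingleton ℝ E x hx0 with he
  set g : (ℝ ∙ x) →ₗ[ℝ] ℝ :=
    (LinearMap.toSpanSingleton ℝ ℝ ‖x‖).comp (e.symm : (ℝ ∙ x) →ₗ[ℝ] ℝ) with hgdef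
  have hg_apply : ∀ t : ℝ, g (e t) = t * ‖x‖ := by
    intro t
    simp [hgdef, LinearMap.toSpanSingleton_apply, smul_eq_mul]
  have hg_le : ∀ v : (ℝ ∙ x), g v ≤ N v := by
    intro v
    obtain ⟨t, rfl⟩ := e.surjective v
    rw [hg_apply]
    have hv : ((e t : ℝ ∙ x) : E) = t • x := by simp [he]
    rw [hv]
    rcases le_or_gt 0 t with ht | ht
    · have hsup : (t • x) ⊔ 0 = t • x := sup_eq_left.mpr (smul_nonneg ht hx)
      have : N (t • x) = t * ‖x‖ := by
        simp only [N, hsup, norm_smul, Real.norm_eq_abs, abs_of_nonneg ht]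
      rw [this]
    · exact le_trans (mul_nonpos_of_nonpos_of_nonneg ht.le (norm_nonneg x)) (norm_nonneg _)
  obtain ⟨F, hFeq, hFle⟩ := exists_extension_of_le_sublinear ⟨ℝ ∙ x, g⟩ N hN_hom hN_add hg_le
  have hbound : ∀ y, |F y| ≤ ‖y‖ := by
    intro y
    rw [abs_le]
    constructor
    · have h1 := hFle (-y)
      rw [map_neg] at h1
      have h2 : N (-y) ≤ ‖y‖ := (norm_sup_zero_le (-y)).trans (norm_neg y).le
      linarith
    · exact (hFle y).trans (norm_sup_zero_le y)
  refine ⟨F.mkContinuous 1 (fun y => by simpa using hbound y), ?_, ?_, ?_⟩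
  · intro y hy
    have h1 := hFle (-y)
    rw [map_neg] at h1
    have h0 : (-y) ⊔ 0 = 0 := sup_eq_right.mpr (neg_nonpos.mpr hy)
    have h2 : N (-y) = 0 := by simp [N, h0]
    have : -F y ≤ 0 := h2 ▸ h1
    simpa [LinearMap.mkContinuous_apply] using neg_nonpos.mp this
  · intro y
    simpa [LinearMap.mkContinuous_apply] using hbound y
  · have hmem : x ∈ (ℝ ∙ x) := Submodule.mem_span_singleton_self x
    have h1 := hFeq ⟨x, hmem⟩
    have h2 : (⟨x, hmem⟩ : ℝ ∙ x) = e 1 := Subtype.ext (by simp [he])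
    have h3 : (⟨ℝ ∙ x, g⟩ : E →ₗ.[ℝ] ℝ) ⟨x, hmem⟩ = ‖x‖ := by
      show g ⟨x, hmem⟩ = ‖x‖
      rw [h2, hg_apply, one_mul]
    simp only [h3] at h1
    simpa [LinearMap.mkContinuous_apply] using h1

end Aux

set_option linter.unusedSectionVars false

private lemma cont_dist_aux {X : Type*} (m : PseudoMetricSpace X) (a : X) :
    @Continuous X ℝ m.toUniformSpace.toTopologicalSpace _
      (fun x => @dist X m.toDist x a) := by
  letI := m
  exact continuous_id.dist continuous_const

section Aux2
variable {E : Type*} [NormedAddCommGroup E] [Lattice E] [HasSolidNorm E] [IsOrderedAddMonoid E] [NormedSpace ℝ E] [PosSMulStrictMono ℝ E] [PosSMulReflectLT ℝ E]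

private lemma exists_inj_cont [TopologicalSpace.SeparableSpace E] :
    ∃ Φ : E → (ℕ × ℕ → ℝ), Function.Injective Φ ∧
      Continuous[absWeakTopology E, _] Φ := by
  have hne : Nonempty E := ⟨0⟩
  obtain ⟨u, hu⟩ := TopologicalSpace.exists_dense_seq E
  choose f hfpos hfbd hfnorm using fun n => exists_pos_norming (E := E) |u n| (abs_nonneg _)
  refine ⟨fun x p => f p.1 |x - u p.2|, ?_, ?_⟩
  · intro x y hxy
    have key : ∀ n, f n |x - y| = 0 := by
      intro n
      have h0 : 0 ≤ f n |x - y| := hfpos n _ (abs_nonneg _)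
      by_contra hne'
      have hpos : 0 < f n |x - y| := lt_of_le_of_ne h0 (Ne.symm hne')
      set ε := f n |x - y| / 4 with hε
      obtain ⟨m, hm⟩ := hu.exists_dist_lt x (by positivity : (0:ℝ) < ε)
      have habs : |x - y| ≤ |x - u m| + |y - u m| := by
        calc |x - y| = |(x - u m) + (u m - y)| := by abel_nf
        _ ≤ |x - u m| + |u m - y| := abs_add_le _ _
        _ = |x - u m| + |y - u m| := by rw [abs_sub_comm (u m) y]
      have h1 : f n |x - y| ≤ f n |x - u m| + f n |y - u m| := by
        have h2 := hfpos n _ (sub_nonneg.mpr habs)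
        rw [map_sub, map_add] at h2
        linarith
      have h2 : f n |y - u m| = f n |x - u m| := (congrFun hxy (n, m)).symm
      have h3 : f n |x - u m| ≤ ε := by
        have h4 : |(f n) (|x - u m|)| ≤ ‖(|x - u m| : E)‖ := hfbd n _
        rw [norm_abs_eq_norm] at h4
        have h5 : f n |x - u m| ≤ ‖x - u m‖ := (le_abs_self _).trans h4
        rw [← dist_eq_norm] at h5
        exact h5.trans hm.le
      rw [h2] at h1
      rw [hε] at h3
      linarith
    by_contra hne'
    have hz : x - y ≠ 0 := sub_ne_zero.mpr hne'
    have hnorm_pos : 0 < ‖x - y‖ := norm_pos_iff.mpr hz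
    obtain ⟨m, hm⟩ := hu.exists_dist_lt (x - y) (by positivity : (0:ℝ) < ‖x - y‖ / 3)
    rw [dist_eq_norm] at hm
    have h1 : f m |u m| = ‖u m‖ := by rw [hfnorm m, norm_abs_eq_norm]
    have h2 : f m (|u m| - |x - y|) ≤ ‖u m - (x - y)‖ := by
      calc f m (|u m| - |x - y|) ≤ |f m (|u m| - |x - y|)| := le_abs_self _
      _ ≤ ‖|u m| - |x - y|‖ := hfbd m _
      _ ≤ ‖u m - (x - y)‖ := norm_abs_sub_abs _ _
    have h4 : ‖u m - (x - y)‖ < ‖x - y‖ / 3 := by rwa [norm_sub_rev]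
    have h5 : ‖x - y‖ - ‖u m‖ ≤ ‖x - y‖ / 3 := by
      have := norm_sub_norm_le (x - y) (u m)
      rw [norm_sub_rev (x - y) (u m)] at this
      linarith
    have hfm : 0 < f m |x - y| := by
      have heq : f m |x - y| = f m |u m| - f m (|u m| - |x - y|) := by
        rw [map_sub]; ring
      rw [heq, h1]
      linarith
    exact absurd (key m) (ne_of_gt hfm)
  · exact @continuous_pi E (ℕ × ℕ) (fun _ => ℝ) (absWeakTopology E) _ _ (fun p => by
      show @Continuous E ℝ (absWeakTopology E) _ (fun x => f p.1 |x - u p.2|)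
      rw [absWeakTopology]
      exact continuous_iInf_dom (i := ⟨f p.1, hfpos p.1⟩)
        (cont_dist_aux (absSeminormDist (f p.1) (hfpos p.1)) (u p.2)))

end Aux2

private lemma key_metrizable {X Y : Type*} [tY : TopologicalSpace Y] [T2Space Y]
    [TopologicalSpace.MetrizableSpace Y]
    (τ : TopologicalSpace X) (Φ : X → Y) (hΦi : Function.Injective Φ)
    (hΦc : Continuous[τ, tY] Φ) (K : Set X)
    (hK : @IsCompact X τ K ∨ @IsSeqCompact X τ K) :
    @TopologicalSpace.MetrizableSpace K (TopologicalSpace.induced (Subtype.val : K → X) τ) := by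
  obtain ⟨t₁, ht₁⟩ : ∃ t : TopologicalSpace K,
      t = TopologicalSpace.induced (Subtype.val : K → X) τ := ⟨_, rfl⟩
  rw [← ht₁]
  set i : K → Y := Φ ∘ (Subtype.val : K → X) with hi
  obtain ⟨T, hT⟩ : ∃ t : TopologicalSpace K, t = TopologicalSpace.induced i tY := ⟨_, rfl⟩
  have hinj : Function.Injective i := fun a b h => Subtype.ext (hΦi h)
  have hemb : @Topology.IsEmbedding K Y T tY i := ⟨⟨hT⟩, hinj⟩
  have hT2 : @T2Space K T := @Topology.IsEmbedding.t2Space K Y T tY _ i hemb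
  have hMet : @TopologicalSpace.MetrizableSpace K T :=
    @Topology.IsEmbedding.metrizableSpace K Y T tY _ i hemb
  have h₁ : t₁ ≤ T := by
    have hle : τ ≤ tY.induced Φ := continuous_iff_le_induced.mp hΦc
    have h2 : t₁ ≤ (tY.induced Φ).induced (Subtype.val : K → X) := ht₁ ▸ induced_mono hle
    rw [induced_compose] at h2
    rw [hT]
    exact h2
  have hTc : Continuous[T, tY] i := hT ▸ continuous_induced_dom
  have h₂ : T ≤ t₁ := by
    rw [← continuous_id_iff_le]
    cases hK with
    | inl hc =>
      haveI hcs : @CompactSpace K t₁ := by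
        rw [ht₁]
        exact (@isCompact_iff_compactSpace X τ K).mp hc
      have hcont : Continuous[t₁, T] (id : K → K) := continuous_id_iff_le.mpr h₁
      let homeo := @Continuous.homeoOfEquivCompactToT2 K K t₁ T hcs hT2 (Equiv.refl K) hcont
      have hc2 := @Homeomorph.continuous K K T t₁ (@Homeomorph.symm K K t₁ T homeo)
      have hfun : ⇑(@Homeomorph.symm K K t₁ T homeo) = (id : K → K) := by
        funext z
        rfl
      rwa [hfun] at hc2
    | inr hsc =>
      letI : TopologicalSpace K := T
      haveI := hMet
      refine @SeqContinuous.continuous K K T t₁ ?_ id ?_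
      · infer_instance
      intro z z0 hz
      show Filter.Tendsto (id ∘ z) Filter.atTop (@nhds K t₁ (id z0))
      rw [Function.id_comp]
      show Filter.Tendsto z Filter.atTop (@nhds K t₁ z0)
      rw [ht₁, nhds_induced, Filter.tendsto_comap_iff]
      by_contra hcon
      obtain ⟨U, hU, hfreq⟩ := Filter.not_tendsto_iff_exists_frequently_notMem.mp hcon
      obtain ⟨φ, hφ, hout⟩ := Filter.extraction_of_frequently_atTop hfreq
      obtain ⟨y, hyK, ψ, hψ, hyt⟩ := hsc (x := fun k => ((z (φ k) : K) : X)) (fun k => (z (φ k)).2)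
      have hy1 : Filter.Tendsto (Φ ∘ ((fun k => ((z (φ k) : K) : X)) ∘ ψ)) Filter.atTop
          (@nhds Y tY (Φ y)) :=
        (@Continuous.tendsto X Y τ tY Φ hΦc y).comp hyt
      have hz' : Filter.Tendsto (i ∘ z) Filter.atTop (@nhds Y tY (i z0)) :=
        (@Continuous.tendsto K Y T tY i hTc z0).comp hz
      have hz'' : Filter.Tendsto ((i ∘ z) ∘ fun k => φ (ψ k)) Filter.atTop
          (@nhds Y tY (i z0)) :=
        hz'.comp ((hφ.comp hψ).tendsto_atTop)
      have heq : Φ y = i z0 := tendsto_nhds_unique hy1 hz''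
      have hyz : y = (z0 : X) := hΦi heq
      rw [hyz] at hyt
      have hev : ∀ᶠ k in Filter.atTop, ((z (φ (ψ k)) : K) : X) ∈ U := hyt.eventually_mem hU
      obtain ⟨k, hk⟩ := hev.exists
      exact hout (ψ k) hk
  exact (le_antisymm h₁ h₂) ▸ hMet

/-- If `K` is an absolutely weakly compact or absolutely weakly sequentially compact subset of
a separable Banach lattice `E`, the absolute weak topology restricted to `K` is metrizable. -/
theorem absWeak_metrizable_on_compact {E : Type*} [NormedAddCommGroup E] [Lattice E] [HasSolidNorm E] [IsOrderedAddMonoid E] [NormedSpace ℝ E] [PosSMulStrictMono ℝ E] [PosSMulReflectLT ℝ E] [CompleteSpace E]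
    [TopologicalSpace.SeparableSpace E] (K : Set E)
    (hK : @IsCompact E (absWeakTopology E) K ∨ @IsSeqCompact E (absWeakTopology E) K) :
    @TopologicalSpace.MetrizableSpace K
      (TopologicalSpace.induced (Subtype.val : K → E) (absWeakTopology E)) := by
  obtain ⟨Φ, hΦi, hΦc⟩ := exists_inj_cont (E := E)
  haveI : TopologicalSpace.MetrizableSpace (ℕ × ℕ → ℝ) := UniformSpace.metrizableSpace
  exact key_metrizable (absWeakTopology E) Φ hΦi hΦc K hK
end

section
/- Every absolutely weakly compact subset of a Banach lattice is absolutely weakly sequentially compact. -/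
set_option linter.unusedSectionVars false

open Filter Topology Pointwise MeasureTheory


set_option maxHeartbeats 1000000

section PosPartDecomp

variable {E : Type*} [NormedAddCommGroup E] [Lattice E] [HasSolidNorm E] [IsOrderedAddMonoid E] [NormedSpace ℝ E] [PosSMulStrictMono ℝ E]

/-- auxiliary: sup of `f` over the order interval `[0, x]`. -/
noncomputable def posSup (f : E →L[ℝ] ℝ) (x : E) : ℝ :=
  sSup (f '' {y | 0 ≤ y ∧ y ≤ x})

variable (f : E →L[ℝ] ℝ)

lemma posSup_bddAbove (x : E) : BddAbove (f '' {y | 0 ≤ y ∧ y ≤ x}) := by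
  refine ⟨‖f‖ * ‖x‖, ?_⟩
  rintro - ⟨y, ⟨hy0, hyx⟩, rfl⟩
  calc f y ≤ ‖f‖ * ‖y‖ := le_trans (le_abs_self _) (f.le_opNorm y)
    _ ≤ ‖f‖ * ‖x‖ := by
        have : |y| ≤ |x| := by
          rw [abs_of_nonneg hy0]
          exact le_trans hyx (le_abs_self x)
        exact mul_le_mul_of_nonneg_left (HasSolidNorm.solid this) (norm_nonneg f)

lemma posSup_nonneg {x : E} (hx : 0 ≤ x) : 0 ≤ posSup f x := by
  have : (0:ℝ) ∈ f '' {y | 0 ≤ y ∧ y ≤ x} := ⟨0, ⟨le_refl _, hx⟩, map_zero f⟩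
  simpa [posSup] using le_csSup (posSup_bddAbove f x) this

lemma le_posSup {x : E} (hx : 0 ≤ x) : f x ≤ posSup f x :=
  le_csSup (posSup_bddAbove f x) (Set.mem_image_of_mem f (show x ∈ {y | 0 ≤ y ∧ y ≤ x} from ⟨hx, le_refl x⟩))

lemma posSup_le {x : E} {c : ℝ} (hne : 0 ≤ x) (h : ∀ y, 0 ≤ y → y ≤ x → f y ≤ c) :
    posSup f x ≤ c := by
  apply csSup_le (Set.Nonempty.image f ⟨0, show (0:E) ∈ {y | 0 ≤ y ∧ y ≤ x} from ⟨le_refl _, hne⟩⟩)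
  rintro - ⟨y, ⟨h0, h1⟩, rfl⟩; exact h y h0 h1

lemma posSup_le_opNorm {x : E} (hx : 0 ≤ x) : posSup f x ≤ ‖f‖ * ‖x‖ := by
  refine posSup_le f hx fun y h0 h1 => ?_
  calc f y ≤ ‖f‖ * ‖y‖ := le_trans (le_abs_self _) (f.le_opNorm y)
    _ ≤ ‖f‖ * ‖x‖ := by
        exact mul_le_mul_of_nonneg_left (HasSolidNorm.solid (by rw [abs_of_nonneg h0]; exact le_trans h1 (le_abs_self x))) (norm_nonneg f)

lemma posSup_add {x y : E} (hx : 0 ≤ x) (hy : 0 ≤ y) :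
    posSup f (x + y) = posSup f x + posSup f y := by
  apply le_antisymm
  · refine posSup_le f (by positivity) fun z hz0 hz1 => ?_
    have h1 : (0:E) ≤ z ⊓ x := le_inf hz0 hx
    have h2 : z ⊓ x ≤ x := inf_le_right
    have h3 : (0:E) ≤ z - z ⊓ x := by simpa using inf_le_left (a := z) (b := x)
    have h4 : z - z ⊓ x ≤ y := by
      have : z - z ⊓ x = (z - z) ⊔ (z - x) := by rw [sub_inf]
      rw [this, sub_self]
      refine sup_le hy ?_
      rw [sub_le_iff_le_add]
      exact hz1.trans (by rw [add_comm])
    have : f z = f (z ⊓ x) + f (z - z ⊓ x) := by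
      rw [← map_add]; congr 1; abel
    rw [this]
    exact add_le_add (le_csSup (posSup_bddAbove f x) ⟨_, ⟨h1, h2⟩, rfl⟩)
      (le_csSup (posSup_bddAbove f y) ⟨_, ⟨h3, h4⟩, rfl⟩)
  · have hxy : (0:E) ≤ x + y := by positivity
    rw [← le_sub_iff_add_le]
    refine posSup_le f hx fun u hu0 hu1 => ?_
    rw [le_sub_iff_add_le, add_comm, ← le_sub_iff_add_le]
    refine posSup_le f hy fun v hv0 hv1 => ?_
    rw [le_sub_iff_add_le, add_comm, ← map_add]
    exact le_csSup (posSup_bddAbove f (x+y))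
      (Set.mem_image_of_mem f (show u + v ∈ {z | 0 ≤ z ∧ z ≤ x + y} from
        ⟨by positivity, add_le_add hu1 hv1⟩))


lemma smul_posPart_aux {t : ℝ} (ht : 0 < t) (x : E) : (t • x)⁺ = t • x⁺ := by
  rw [posPart_def, posPart_def]
  apply le_antisymm
  · refine sup_le ?_ ?_
    · exact smul_le_smul_of_nonneg_left le_sup_left ht.le
    · have := smul_le_smul_of_nonneg_left (le_sup_right : (0:E) ≤ x ⊔ 0) ht.le
      simpa using this
  · have h1 : x ⊔ 0 ≤ t⁻¹ • (t • x ⊔ 0) := by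
      refine sup_le ?_ ?_
      · have := smul_le_smul_of_nonneg_left (le_sup_left : t • x ≤ t • x ⊔ 0) (inv_nonneg.mpr ht.le)
        rwa [inv_smul_smul₀ ht.ne'] at this
      · have := smul_le_smul_of_nonneg_left (le_sup_right : (0:E) ≤ t • x ⊔ 0) (inv_nonneg.mpr ht.le)
        simpa using this
    have := smul_le_smul_of_nonneg_left h1 ht.le
    rwa [smul_inv_smul₀ ht.ne'] at this

lemma smul_negPart_aux {t : ℝ} (ht : 0 < t) (x : E) : (t • x)⁻ = t • x⁻ := by
  rw [negPart_def, negPart_def, ← smul_neg, ← posPart_def, ← posPart_def, smul_posPart_aux ht]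

lemma posSup_smul {t : ℝ} (ht : 0 ≤ t) {x : E} (hx : 0 ≤ x) :
    posSup f (t • x) = t * posSup f x := by
  rcases eq_or_lt_of_le ht with rfl | ht
  · simp only [zero_smul, zero_mul]
    apply le_antisymm
    · refine posSup_le f (le_refl _) fun y h0 h1 => ?_
      have : y = 0 := le_antisymm h1 h0
      simp [this]
    · exact posSup_nonneg f (le_refl _)
  · apply le_antisymm
    · refine posSup_le f (smul_nonneg ht.le hx) fun y h0 h1 => ?_
      have h2 : t⁻¹ • y ≤ x := by
        have := smul_le_smul_of_nonneg_left h1 (inv_nonneg.mpr ht.le)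
        rwa [inv_smul_smul₀ ht.ne'] at this
      have h3 : (0:E) ≤ t⁻¹ • y := smul_nonneg (inv_nonneg.mpr ht.le) h0
      have h4 : f (t⁻¹ • y) ≤ posSup f x :=
        le_csSup (posSup_bddAbove f x) (Set.mem_image_of_mem f (show _ ∈ {y | 0 ≤ y ∧ y ≤ x} from ⟨h3, h2⟩))
      have h5 : f y = t * f (t⁻¹ • y) := by
        rw [_root_.map_smul, smul_eq_mul, ← mul_assoc, mul_inv_cancel₀ ht.ne', one_mul]
      rw [h5]
      exact mul_le_mul_of_nonneg_left h4 ht.le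
    · rw [← le_div_iff₀' ht]
      refine posSup_le f hx fun y h0 h1 => ?_
      rw [le_div_iff₀' ht]
      have h2 : t • y ≤ t • x := smul_le_smul_of_nonneg_left h1 ht.le
      have h3 : (0:E) ≤ t • y := smul_nonneg ht.le h0
      have : f (t • y) ≤ posSup f (t • x) :=
        le_csSup (posSup_bddAbove f (t • x)) (Set.mem_image_of_mem f (show _ ∈ {z | 0 ≤ z ∧ z ≤ t • x} from ⟨h3, h2⟩))
      rw [_root_.map_smul, smul_eq_mul] at this
      exact this

/-- The positive part `G` of `f`, as a bare function. -/
noncomputable def posFunAux (f : E →L[ℝ] ℝ) (x : E) : ℝ := posSup f x⁺ - posSup f x⁻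

lemma posFunAux_add (x y : E) : posFunAux f (x + y) = posFunAux f x + posFunAux f y := by
  have key : (x+y)⁺ + (x⁻ + y⁻) = (x+y)⁻ + (x⁺ + y⁺) := by
    have h1 : (x+y)⁺ - (x+y)⁻ = x + y := posPart_sub_negPart _
    have h2 : x⁺ - x⁻ = x := posPart_sub_negPart _
    have h3 : y⁺ - y⁻ = y := posPart_sub_negPart _
    have := congrArg₂ (· + ·) h1 (congrArg₂ (· + ·) h2 h3).symm
    have e : (x+y)⁺ + (x⁻ + y⁻) - ((x+y)⁻ + (x⁺ + y⁺)) =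
        ((x+y)⁺ - (x+y)⁻) - (x⁺ - x⁻) - (y⁺ - y⁻) := by abel
    rw [h1, h2, h3] at e
    exact sub_eq_zero.mp (by rw [e]; abel)
  have hq := congrArg (posSup f) key
  rw [posSup_add f (x := (x+y)⁺) (y := x⁻ + y⁻) (posPart_nonneg _)
        (add_nonneg (negPart_nonneg _) (negPart_nonneg _)),
      posSup_add f (x := (x+y)⁻) (y := x⁺ + y⁺) (negPart_nonneg _)
        (add_nonneg (posPart_nonneg _) (posPart_nonneg _)),
      posSup_add f (negPart_nonneg _) (negPart_nonneg _),
      posSup_add f (posPart_nonneg _) (posPart_nonneg _)] at hq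
  simp only [posFunAux]
  linarith

lemma posFunAux_smul (t : ℝ) (x : E) : posFunAux f (t • x) = t * posFunAux f x := by
  rcases lt_trichotomy t 0 with ht | rfl | ht
  · have hmt : (0:ℝ) < -t := by linarith
    have hx' : t • x = -((-t) • x) := by rw [neg_smul, neg_neg]
    have h1 : (t • x)⁺ = (-t) • x⁻ := by
      rw [hx', posPart_neg, smul_negPart_aux hmt x]
    have h2 : (t • x)⁻ = (-t) • x⁺ := by
      rw [hx', negPart_neg, smul_posPart_aux hmt x]
    rw [posFunAux, h1, h2, posSup_smul f (by linarith) (negPart_nonneg x),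
      posSup_smul f (by linarith) (posPart_nonneg x), posFunAux]
    ring
  · simp [posFunAux]
  · have h1 : (t • x)⁺ = t • x⁺ := smul_posPart_aux ht x
    have h2 : (t • x)⁻ = t • x⁻ := smul_negPart_aux ht x
    rw [posFunAux, h1, h2, posSup_smul f ht.le (posPart_nonneg x),
      posSup_smul f ht.le (negPart_nonneg x), posFunAux]
    ring

lemma norm_posPart_le' (x : E) : ‖x⁺‖ ≤ ‖x‖ := by
  apply HasSolidNorm.solid
  rw [abs_of_nonneg (posPart_nonneg x)]
  rw [posPart_def]
  exact sup_le (le_abs_self x) (abs_nonneg x)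

lemma norm_negPart_le' (x : E) : ‖x⁻‖ ≤ ‖x‖ := by
  have := norm_posPart_le' (-x)
  rwa [posPart_neg, norm_neg] at this

lemma posFunAux_bound (x : E) : |posFunAux f x| ≤ ‖f‖ * ‖x‖ := by
  have b1 : 0 ≤ posSup f x⁺ := posSup_nonneg f (posPart_nonneg x)
  have b2 : 0 ≤ posSup f x⁻ := posSup_nonneg f (negPart_nonneg x)
  have c1 : posSup f x⁺ ≤ ‖f‖ * ‖x‖ :=
    (posSup_le_opNorm f (posPart_nonneg x)).trans
      (mul_le_mul_of_nonneg_left (norm_posPart_le' x) (norm_nonneg f))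
  have c2 : posSup f x⁻ ≤ ‖f‖ * ‖x‖ :=
    (posSup_le_opNorm f (negPart_nonneg x)).trans
      (mul_le_mul_of_nonneg_left (norm_negPart_le' x) (norm_nonneg f))
  rw [posFunAux, abs_sub_le_iff]
  constructor <;> linarith

/-- The positive part of a continuous linear functional on a Banach lattice. -/
noncomputable def posPartCLM (f : E →L[ℝ] ℝ) : E →L[ℝ] ℝ :=
  LinearMap.mkContinuous
    { toFun := posFunAux f
      map_add' := posFunAux_add f
      map_smul' := posFunAux_smul f } (‖f‖)
    (fun x => by simpa [Real.norm_eq_abs] using posFunAux_bound f x)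

lemma posPartCLM_apply (x : E) : posPartCLM f x = posSup f x⁺ - posSup f x⁻ := rfl

lemma posPartCLM_nonneg {x : E} (hx : 0 ≤ x) : 0 ≤ posPartCLM f x := by
  rw [posPartCLM_apply, posPart_eq_self.mpr hx, negPart_eq_zero.mpr hx]
  have : posSup f (0:E) = 0 := by
    apply le_antisymm
    · exact posSup_le f (le_refl _) fun y h0 h1 => by
        simp [le_antisymm h1 h0]
    · exact posSup_nonneg f (le_refl _)
  rw [this, sub_zero]
  exact posSup_nonneg f hx

lemma le_posPartCLM {x : E} (hx : 0 ≤ x) : f x ≤ posPartCLM f x := by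
  rw [posPartCLM_apply, posPart_eq_self.mpr hx, negPart_eq_zero.mpr hx]
  have : posSup f (0:E) = 0 := by
    apply le_antisymm
    · exact posSup_le f (le_refl _) fun y h0 h1 => by
        simp [le_antisymm h1 h0]
    · exact posSup_nonneg f (le_refl _)
  rw [this, sub_zero]
  exact le_posSup f hx

/-- Every continuous linear functional on a Banach lattice is the difference of two
positive continuous linear functionals. -/
lemma exists_pos_decomposition (f : E →L[ℝ] ℝ) :
    ∃ g h : E →L[ℝ] ℝ, (∀ x : E, 0 ≤ x → 0 ≤ g x) ∧ (∀ x : E, 0 ≤ x → 0 ≤ h x) ∧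
      ∀ x, f x = g x - h x := by
  refine ⟨posPartCLM f, posPartCLM f - f, fun x hx => posPartCLM_nonneg f hx,
    fun x hx => ?_, fun x => by simp⟩
  simp only [ContinuousLinearMap.sub_apply, sub_nonneg]
  exact le_posPartCLM f hx

end PosPartDecomp


section Generic

variable {X : Type*}

lemma psd_tendsto_iff (P : PseudoMetricSpace X) {z : ℕ → X} {x : X} :
    Tendsto z atTop (@nhds X P.toUniformSpace.toTopologicalSpace x) ↔
      Tendsto (fun n => @dist X P.toDist (z n) x) atTop (𝓝 0) := by
  letI := P
  exact tendsto_iff_dist_tendsto_zero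

lemma psd_continuous_of_lip (P : PseudoMetricSpace X) (φ : X → ℝ)
    (h : ∀ x y : X, |φ x - φ y| ≤ @dist X P.toDist x y) :
    @Continuous X ℝ P.toUniformSpace.toTopologicalSpace _ φ := by
  letI := P
  have : LipschitzWith 1 φ := by
    apply LipschitzWith.of_dist_le_mul
    intro x y
    rw [Real.dist_eq]
    simpa using h x y
  exact this.continuous

lemma psd_ball_mem_nhds (P : PseudoMetricSpace X) (x : X) {ε : ℝ} (hε : 0 < ε) :
    {y : X | @dist X P.toDist y x < ε} ∈ @nhds X P.toUniformSpace.toTopologicalSpace x := by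
  letI := P
  exact Metric.ball_mem_nhds x hε

end Generic

section Top

variable {E : Type*} [NormedAddCommGroup E] [Lattice E] [HasSolidNorm E] [IsOrderedAddMonoid E] [NormedSpace ℝ E]

/-- shorthand for positive functionals -/
abbrev PosF (E : Type*) [NormedAddCommGroup E] [Lattice E] [HasSolidNorm E] [IsOrderedAddMonoid E] [NormedSpace ℝ E] :=
  {f : E →L[ℝ] ℝ // ∀ x : E, 0 ≤ x → 0 ≤ f x}

lemma absWeak_le_psd (f : PosF E) :
    absWeakTopology E ≤ (absSeminormDist f.1 f.2).toUniformSpace.toTopologicalSpace :=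
  iInf_le _ f

lemma posF_mono (f : PosF E) {x y : E} (h : x ≤ y) : f.1 x ≤ f.1 y := by
  have := f.2 (y - x) (sub_nonneg.mpr h)
  rw [map_sub] at this
  linarith

lemma posF_abs_bound (f : PosF E) (x : E) : |f.1 x| ≤ f.1 |x| := by
  have h1 : f.1 x ≤ f.1 |x| := posF_mono f (le_abs_self x)
  have h2 : -(f.1 |x|) ≤ f.1 x := by
    have := posF_mono f (neg_le.mpr (neg_le_abs x))
    rw [map_neg] at this
    linarith
  exact abs_le.mpr ⟨h2, h1⟩

lemma tendsto_absWeak_iff {z : ℕ → E} {x : E} :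
    Tendsto z atTop (@nhds E (absWeakTopology E) x) ↔
      ∀ f : PosF E, Tendsto (fun n => f.1 |z n - x|) atTop (𝓝 0) := by
  rw [absWeakTopology, _root_.nhds_iInf, tendsto_iInf]
  exact forall_congr' fun f =>
    Iff.trans (psd_tendsto_iff (absSeminormDist f.1 f.2)) Iff.rfl

lemma continuous_absWeak_of_lip (φ : E → ℝ) (f : PosF E)
    (h : ∀ x y : E, |φ x - φ y| ≤ f.1 |x - y|) :
    @Continuous E ℝ (absWeakTopology E) _ φ := by
  refine continuous_le_dom (absWeak_le_psd f) ?_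
  exact psd_continuous_of_lip (absSeminormDist f.1 f.2) φ h

lemma ball_mem_absWeak_nhds (f : PosF E) (x : E) {ε : ℝ} (hε : 0 < ε) :
    {y : E | f.1 |y - x| < ε} ∈ @nhds E (absWeakTopology E) x := by
  have hle := nhds_mono (a := x) (absWeak_le_psd f)
  exact hle (psd_ball_mem_nhds (absSeminormDist f.1 f.2) x hε)

end Top

section Main

variable {E : Type*} [NormedAddCommGroup E] [Lattice E] [HasSolidNorm E] [IsOrderedAddMonoid E] [NormedSpace ℝ E] [PosSMulStrictMono ℝ E]
  [CompleteSpace E]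

lemma continuous_absWeak_clm (f : E →L[ℝ] ℝ) :
    @Continuous E ℝ (absWeakTopology E) _ f := by
  obtain ⟨g, h, hg, hh, hfg⟩ := exists_pos_decomposition f
  refine continuous_absWeak_of_lip f ⟨g + h, fun u hu => add_nonneg (hg u hu) (hh u hu)⟩ ?_
  intro u v
  have e1 : f u - f v = g (u - v) - h (u - v) := by
    rw [hfg u, hfg v, map_sub, map_sub]; ring
  rw [e1]
  have b1 : |g (u - v)| ≤ g |u - v| := posF_abs_bound ⟨g, hg⟩ (u - v)
  have b2 : |h (u - v)| ≤ h |u - v| := posF_abs_bound ⟨h, hh⟩ (u - v)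
  have : |g (u-v) - h (u-v)| ≤ |g (u-v)| + |h (u-v)| := abs_sub _ _
  have e2 : (↑(⟨g + h, fun u hu => add_nonneg (hg u hu) (hh u hu)⟩ : PosF E) : E →L[ℝ] ℝ) |u - v|
      = g |u - v| + h |u - v| := by simp
  rw [e2]
  linarith

theorem absWeakCompact_seqCompact' (K : Set E)
    (hK : @IsCompact E (absWeakTopology E) K) : @IsSeqCompact E (absWeakTopology E) K := by
  intro x hx
  classical
  -- the separable closed convex hull
  set M : Submodule ℝ E := Submodule.span ℝ (Set.range x) with hM
  set Y : Submodule ℝ E := M.topologicalClosure with hY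
  have hYclosed : IsClosed (Y : Set E) := Submodule.isClosed_topologicalClosure M
  have hYconv : Convex ℝ (Y : Set E) := Y.convex
  have hxY : ∀ n, x n ∈ (Y : Set E) := fun n =>
    M.le_topologicalClosure (Submodule.subset_span (Set.mem_range_self n))
  have hYsep : TopologicalSpace.IsSeparable (Y : Set E) := by
    rw [hY, Submodule.topologicalClosure_coe]
    exact ((Set.countable_range x).isSeparable.span).closure
  obtain ⟨c, hc_count, hc_sub⟩ := hYsep
  -- enumerate a countable dense-in-Y set
  obtain ⟨y, hy_range⟩ : ∃ y : ℕ → E, insert 0 c = Set.range y :=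
    Set.Countable.exists_eq_range (hc_count.insert 0) (Set.insert_nonempty 0 c)
  have hc_dense : ∀ u ∈ (Y : Set E), ∀ ε > (0:ℝ), ∃ k, ‖u - y k‖ < ε := by
    intro u hu ε hε
    have : u ∈ closure (Set.range y) := by
      rw [← hy_range]
      exact closure_mono (Set.subset_insert 0 c) (hc_sub hu)
    obtain ⟨a, ha_mem, ha_dist⟩ := Metric.mem_closure_iff.mp this ε hε
    obtain ⟨k, rfl⟩ := ha_mem
    exact ⟨k, by rwa [← dist_eq_norm]⟩
  -- norming functionals for differences
  have hgex : ∀ i : ℕ × ℕ, ∃ gi : E →L[ℝ] ℝ, ‖gi‖ ≤ 1 ∧ gi (y i.1 - y i.2) = ‖y i.1 - y i.2‖ := by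
    intro i
    by_cases hzero : y i.1 - y i.2 = 0
    · exact ⟨0, by simp, by simp [hzero]⟩
    · obtain ⟨gi, hg1, hg2⟩ := exists_dual_vector ℝ (y i.1 - y i.2) (norm_ne_zero_iff.mpr hzero)
      exact ⟨gi, le_of_eq hg1, by exact_mod_cast hg2⟩
  choose g hg_norm hg_val using hgex
  -- separation of points of Y by the countable family g
  have hsepn : ∀ u v : E, u ∈ (Y : Set E) → v ∈ (Y : Set E) →
      (∀ i, g i u = g i v) → u = v := by
    intro u v hu hv heq
    by_contra hne
    have hd : (0:ℝ) < ‖u - v‖ := by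
      rw [norm_pos_iff, sub_ne_zero]; exact hne
    set ε : ℝ := ‖u - v‖ / 5 with hε
    have hεpos : 0 < ε := by positivity
    obtain ⟨k, hk⟩ := hc_dense u hu ε hεpos
    obtain ⟨l, hl⟩ := hc_dense v hv ε hεpos
    have hb : ∀ (wv : E), |g (k, l) wv| ≤ ‖wv‖ := by
      intro wv
      calc |g (k, l) wv| ≤ ‖g (k,l)‖ * ‖wv‖ := (g (k,l)).le_opNorm wv
        _ ≤ 1 * ‖wv‖ := mul_le_mul_of_nonneg_right (hg_norm (k,l)) (norm_nonneg _)
        _ = ‖wv‖ := one_mul _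
    have hkey : ‖y k - y l‖ = g (k,l) (y k - u) + (g (k,l) u - g (k,l) v) + g (k,l) (v - y l) := by
      rw [← hg_val (k,l)]
      simp only [map_sub]
      ring
    have e1 : |g (k,l) (y k - u)| ≤ ‖y k - u‖ := hb _
    have e2 : |g (k,l) (v - y l)| ≤ ‖v - y l‖ := hb _
    have e3 : ‖y k - u‖ < ε := by rwa [norm_sub_rev]
    have e4 : ‖v - y l‖ < ε := hl
    have e5 : g (k,l) u - g (k,l) v = 0 := by rw [heq (k,l)]; ring
    have e6 : ‖y k - y l‖ < 2 * ε := by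
      rw [hkey, e5]
      have := abs_le.mp e1
      have := abs_le.mp e2
      linarith [(abs_le.mp e1).2, (abs_le.mp e2).2]
    have e7 : ‖u - v‖ ≤ ‖u - y k‖ + ‖y k - y l‖ + ‖y l - v‖ := by
      calc ‖u - v‖ = ‖(u - y k) + (y k - y l) + (y l - v)‖ := by abel_nf
        _ ≤ _ := norm_add₃_le
    have e8 : ‖y l - v‖ < ε := by rwa [norm_sub_rev]
    rw [hε] at *
    linarith
  -- bounds for the diagonal argument
  have hgb : ∀ i : ℕ × ℕ, ∃ C : ℝ, ∀ w ∈ K, |g i w| ≤ C := by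
    intro i
    have himg : IsCompact ((g i) '' K) := @IsCompact.image E ℝ (absWeakTopology E) _ K (g i) hK
      (continuous_absWeak_clm (g i))
    obtain ⟨r, hr⟩ := (Metric.isBounded_iff_subset_closedBall (0:ℝ)).mp himg.isBounded
    refine ⟨r, fun w hw => ?_⟩
    have := hr (Set.mem_image_of_mem (g i) hw)
    simpa [Real.dist_eq] using this
  choose C hC using hgb
  -- diagonal extraction through a compact metrizable product
  set S : Set ((ℕ × ℕ) → ℝ) := Set.univ.pi fun i => Set.Icc (-(C i)) (C i) with hS
  have hScomp : IsCompact S := isCompact_univ_pi fun i => isCompact_Icc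
  have hSseq : IsSeqCompact S := hScomp.isSeqCompact
  have humem : ∀ n, (fun i => g i (x n)) ∈ S := by
    intro n i _
    exact abs_le.mp (hC i (x n) (hx n))
  obtain ⟨L, hLS, φ, hφ, hLconv⟩ := hSseq humem
  set z : ℕ → E := x ∘ φ with hz
  have hzK : ∀ n, z n ∈ K := fun n => hx (φ n)
  have hzY : ∀ n, z n ∈ (Y : Set E) := fun n => hxY (φ n)
  have hcoord : ∀ i, Tendsto (fun j => g i (z j)) atTop (𝓝 (L i)) := by
    intro i
    exact (tendsto_pi_nhds.mp hLconv i)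
  -- all cluster points of subsequences of z are determined
  have hcl : ∀ (ψ : ℕ → ℕ), StrictMono ψ → ∀ x' : E,
      @ClusterPt E (absWeakTopology E) x' (Filter.map (z ∘ ψ) atTop) →
      x' ∈ (Y : Set E) ∧ ∀ i, g i x' = L i := by
    intro ψ hψ x' hx'
    constructor
    · by_contra hnotY
      obtain ⟨f, u, hfu, hux⟩ := geometric_hahn_banach_closed_point hYconv hYclosed hnotY
      have hfca : @ContinuousAt E ℝ (absWeakTopology E) _ f x' :=
        @Continuous.continuousAt E ℝ (absWeakTopology E) _ f x' (continuous_absWeak_clm f)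
      have hfc : @ClusterPt ℝ _ (f x') (Filter.map f (Filter.map (z ∘ ψ) atTop)) :=
        @ClusterPt.map E ℝ (absWeakTopology E) _ f x' _ _ hx' hfca (le_refl _)
      have hle : Filter.map f (Filter.map (z ∘ ψ) atTop) ≤ 𝓟 (Set.Iio u) := by
        rw [Filter.map_map, le_principal_iff]
        apply Filter.mem_map.mpr
        apply Filter.Eventually.of_forall
        intro j
        exact hfu _ (hzY (ψ j))
      have : f x' ∈ closure (Set.Iio u) :=
        mem_closure_iff_clusterPt.mpr (hfc.mono hle)
      rw [closure_Iio] at this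
      exact absurd hux (not_lt.mpr this)
    · intro i
      have hfca : @ContinuousAt E ℝ (absWeakTopology E) _ (g i) x' :=
        @Continuous.continuousAt E ℝ (absWeakTopology E) _ (g i) x' (continuous_absWeak_clm (g i))
      have hfc : @ClusterPt ℝ _ (g i x') (Filter.map (g i) (Filter.map (z ∘ ψ) atTop)) :=
        @ClusterPt.map E ℝ (absWeakTopology E) _ (g i) x' _ _ hx' hfca (le_refl _)
      have htd : Tendsto (fun j => g i (z (ψ j))) atTop (𝓝 (L i)) :=
        (hcoord i).comp hψ.tendsto_atTop
      have hle : Filter.map (g i) (Filter.map (z ∘ ψ) atTop) ≤ 𝓝 (L i) := by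
        rw [Filter.map_map]
        exact htd
      have hne : (𝓝 (g i x') ⊓ 𝓝 (L i)).NeBot :=
        hfc.mono hle
      exact t2_iff_nhds.mp inferInstance hne
  -- the candidate limit
  have hzne : (Filter.map z atTop).NeBot := Filter.map_neBot
  have hzle : Filter.map z atTop ≤ 𝓟 K :=
    le_principal_iff.mpr (Filter.mem_map.mpr (Filter.Eventually.of_forall hzK))
  obtain ⟨xs, hxsK, hxscl⟩ := @IsCompact.exists_clusterPt E (absWeakTopology E) K hK
    (Filter.map z atTop) hzne hzle
  have hid : z ∘ (id : ℕ → ℕ) = z := rfl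
  have hxs_prop : xs ∈ (Y : Set E) ∧ ∀ i, g i xs = L i := by
    apply hcl id strictMono_id xs
    rwa [hid]
  -- prove convergence
  have hconv : Tendsto z atTop (@nhds E (absWeakTopology E) xs) := by
    by_contra hnot
    rw [tendsto_absWeak_iff] at hnot
    push_neg at hnot
    obtain ⟨f, hf⟩ := hnot
    rw [Metric.tendsto_atTop] at hf
    push_neg at hf
    obtain ⟨ε, hεpos, hfreq⟩ := hf
    have hfreq' : ∃ᶠ n in atTop, ε ≤ f.1 |z n - xs| := by
      rw [Filter.frequently_atTop]
      intro N
      obtain ⟨n, hn, hdist⟩ := hfreq N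
      refine ⟨n, hn, ?_⟩
      have : dist (f.1 |z n - xs|) 0 = f.1 |z n - xs| := by
        rw [Real.dist_eq, sub_zero, abs_of_nonneg (f.2 _ (abs_nonneg _))]
      rwa [this] at hdist
    obtain ⟨ψ, hψ, hψ_prop⟩ := extraction_of_frequently_atTop hfreq'
    -- extract a cluster point of the bad subsequence
    have hwne : (Filter.map (z ∘ ψ) atTop).NeBot := Filter.map_neBot
    have hwle : Filter.map (z ∘ ψ) atTop ≤ 𝓟 K :=
      le_principal_iff.mpr (Filter.mem_map.mpr (Filter.Eventually.of_forall fun j => hzK (ψ j)))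
    obtain ⟨x', hx'K, hx'cl⟩ := @IsCompact.exists_clusterPt E (absWeakTopology E) K hK
      (Filter.map (z ∘ ψ) atTop) hwne hwle
    obtain ⟨hx'Y, hx'val⟩ := hcl ψ hψ x' hx'cl
    have hxx : x' = xs := hsepn x' xs hx'Y hxs_prop.1
      (fun i => by rw [hx'val i, hxs_prop.2 i])
    -- but the subsequence stays away from xs
    have hball : {v : E | f.1 |v - x'| < ε} ∈ @nhds E (absWeakTopology E) x' :=
      ball_mem_absWeak_nhds f x' hεpos
    have hfreq2 : ∃ᶠ j in atTop, (z ∘ ψ) j ∈ {v : E | f.1 |v - x'| < ε} := by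
      by_contra hcontra
      rw [Filter.not_frequently] at hcontra
      have hBc : {v : E | f.1 |v - x'| < ε}ᶜ ∈ Filter.map (z ∘ ψ) atTop :=
        Filter.mem_map.mpr (hcontra.mono fun j hj => hj)
      have hnb : (@nhds E (absWeakTopology E) x' ⊓ Filter.map (z ∘ ψ) atTop).NeBot := hx'cl
      obtain ⟨v, hv1, hv2⟩ := hnb.nonempty_of_mem
        (Filter.inter_mem (Filter.mem_inf_of_left hball) (Filter.mem_inf_of_right hBc))
      exact hv2 hv1
    obtain ⟨j, hj⟩ := hfreq2.exists
    have : f.1 |z (ψ j) - x'| < ε := hj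
    rw [hxx] at this
    exact absurd (hψ_prop j) (not_le.mpr this)
  exact ⟨xs, hxsK, φ, hφ, hconv⟩

end Main


/-- Every absolutely weakly compact subset of a Banach lattice is absolutely weakly
sequentially compact. -/
theorem absWeakCompact_seqCompact {E : Type*} [NormedAddCommGroup E] [Lattice E] [HasSolidNorm E] [IsOrderedAddMonoid E] [NormedSpace ℝ E] [PosSMulStrictMono ℝ E] [CompleteSpace E] (K : Set E)
    (hK : @IsCompact E (absWeakTopology E) K) : @IsSeqCompact E (absWeakTopology E) K := by
  exact absWeakCompact_seqCompact' K hK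
end

section
/- Let K be an absolutely weakly sequentially compact subset of a separable Banach lattice E. Then K is absolutely weakly compact. -/
set_option linter.unusedSectionVars false

open Filter Topology Pointwise MeasureTheory


lemma exists_pos_functional {E : Type*} [NormedAddCommGroup E] [Lattice E] [HasSolidNorm E] [IsOrderedAddMonoid E] [NormedSpace ℝ E]
    [PosSMulStrictMono ℝ E] [PosSMulReflectLT ℝ E] (u : E) (hu0 : 0 ≤ u) :
    ∃ g : E →L[ℝ] ℝ, (∀ x : E, 0 ≤ x → 0 ≤ g x) ∧ ‖g‖ ≤ 1 ∧ ‖u‖ / 2 ≤ g u := by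
  rcases eq_or_ne u 0 with rfl | hu
  · exact ⟨0, fun x _ => le_rfl, by simp, by simp⟩
  have hnu : 0 < ‖u‖ := norm_pos_iff.mpr hu
  set r : ℝ := ‖u‖ / 2 with hr
  have hrpos : 0 < r := by positivity
  set s : Set E := Metric.ball (0 : E) r + {y : E | y ≤ 0} with hs
  have hso : IsOpen s := (Metric.isOpen_ball).add_right
  have hsc : Convex ℝ s := by
    refine (convex_ball (0:E) r).add ?_
    intro y hy z hz a b ha hb _
    exact add_nonpos (smul_nonpos_of_nonneg_of_nonpos ha hy)
      (smul_nonpos_of_nonneg_of_nonpos hb hz)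
  have hus : u ∉ s := by
    rintro ⟨b, hb, y, hy, rfl⟩
    have h1 : b + y ≤ b := by simpa using add_le_add_left (hy : y ≤ (0:E)) b
    have h2 : ‖b + y‖ ≤ ‖b‖ := by
      refine norm_le_norm_of_abs_le_abs ?_
      calc |b + y| = b + y := abs_of_nonneg hu0
      _ ≤ b := h1
      _ ≤ |b| := le_abs_self b
    have hbn : ‖b‖ < r := by simpa using hb
    have : ‖b + y‖ < ‖b + y‖ / 2 := lt_of_le_of_lt h2 hbn
    linarith [norm_nonneg (b + y)]
  obtain ⟨g, hg⟩ := geometric_hahn_banach_open_point hsc hso hus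
  have h0s : (0 : E) ∈ s := ⟨0, by simpa using hrpos, 0, le_rfl, by simp⟩
  have hgu : 0 < g u := by simpa using hg 0 h0s
  -- positivity
  have hgpos : ∀ x : E, 0 ≤ x → 0 ≤ g x := by
    intro x hx
    by_contra hneg
    push_neg at hneg
    set t : ℝ := (g u + 1) / (-g x) with ht
    have htpos : 0 < t := by
      apply div_pos (by linarith) (by linarith)
    have hmem : (-t) • x ∈ s :=
      ⟨0, by simpa using hrpos, (-t) • x,
        smul_nonpos_of_nonpos_of_nonneg (by linarith) hx, by simp⟩
    have := hg _ hmem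
    rw [_root_.map_smul] at this
    have : (-t) * g x < g u := this
    have ht2 : (-t) * g x = g u + 1 := by
      rw [ht, div_neg, neg_neg, div_mul_cancel₀ _ (ne_of_lt hneg)]
    linarith
  -- key inequality: ∀ x, g x * r ≤ g u * ‖x‖
  have hb : ∀ x : E, g x * r ≤ g u * ‖x‖ := by
    intro x
    refine le_of_forall_pos_le_add ?_
    intro ε hε
    set δ : ℝ := ε / g u with hδ
    have hδpos : 0 < δ := div_pos hε hgu
    have hden : (0:ℝ) < ‖x‖ + δ := by positivity
    have hy : (r / (‖x‖ + δ)) • x ∈ s := by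
      refine ⟨(r / (‖x‖ + δ)) • x, ?_, 0, le_rfl, by simp⟩
      simp only [Metric.mem_ball, dist_zero_right, norm_smul, Real.norm_eq_abs]
      rw [abs_of_pos (div_pos hrpos hden)]
      calc r / (‖x‖ + δ) * ‖x‖ < r / (‖x‖ + δ) * (‖x‖ + δ) := by
            apply mul_lt_mul_of_pos_left (by linarith) (div_pos hrpos hden)
      _ = r := by field_simp
    have := hg _ hy
    rw [_root_.map_smul] at this
    have h3 : r / (‖x‖ + δ) * g x < g u := this
    have h4 : r * g x < g u * (‖x‖ + δ) := by
      have := (div_lt_iff₀ hden).mp (by rwa [div_mul_eq_mul_div, mul_comm] at h3)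
      linarith
    have h5 : g u * δ = ε := by rw [hδ]; field_simp [hgu.ne']
    nlinarith
  have hgnorm : ‖g‖ ≤ g u / r := by
    refine ContinuousLinearMap.opNorm_le_bound _ (by positivity) ?_
    intro x
    rw [Real.norm_eq_abs, abs_le]
    constructor
    · rw [neg_le, div_mul_eq_mul_div, le_div_iff₀ hrpos]
      have := hb (-x)
      simp only [map_neg, norm_neg] at this
      linarith
    · rw [div_mul_eq_mul_div, le_div_iff₀ hrpos]
      linarith [hb x]
  -- normalize
  have hgne : g ≠ 0 := by
    intro h; rw [h] at hgu; simpa using hgu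
  have hgn : 0 < ‖g‖ := norm_pos_iff.mpr hgne
  refine ⟨‖g‖⁻¹ • g, ?_, ?_, ?_⟩
  · intro x hx
    simp only [ContinuousLinearMap.smul_apply, smul_eq_mul]
    exact mul_nonneg (by positivity) (hgpos x hx)
  · refine ContinuousLinearMap.opNorm_le_bound _ zero_le_one ?_
    intro x
    simp only [ContinuousLinearMap.smul_apply, smul_eq_mul, Real.norm_eq_abs, abs_mul,
      abs_of_pos (inv_pos.mpr hgn)]
    calc ‖g‖⁻¹ * |g x| ≤ ‖g‖⁻¹ * (‖g‖ * ‖x‖) := by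
          refine mul_le_mul_of_nonneg_left ?_ (by positivity)
          simpa [Real.norm_eq_abs] using g.le_opNorm x
    _ = ‖x‖ := by field_simp
    _ = 1 * ‖x‖ := (one_mul _).symm
  · simp only [ContinuousLinearMap.smul_apply, smul_eq_mul]
    have h6 : ‖g‖ * r ≤ g u := by
      have := mul_le_mul_of_nonneg_right hgnorm hrpos.le
      rwa [div_mul_cancel₀ _ hrpos.ne'] at this
    calc ‖u‖ / 2 = r := hr.symm
    _ = ‖g‖⁻¹ * (‖g‖ * r) := by field_simp
    _ ≤ ‖g‖⁻¹ * g u := mul_le_mul_of_nonneg_left h6 (by positivity)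


lemma exists_strictly_positive (E : Type*) [NormedAddCommGroup E] [Lattice E] [HasSolidNorm E] [IsOrderedAddMonoid E] [NormedSpace ℝ E]
    [PosSMulStrictMono ℝ E] [PosSMulReflectLT ℝ E] [TopologicalSpace.SeparableSpace E] :
    ∃ f : E →L[ℝ] ℝ, (∀ x : E, 0 ≤ x → 0 ≤ f x) ∧ ∀ x : E, x ≠ 0 → 0 < f |x| := by
  have : Nonempty E := ⟨0⟩
  obtain ⟨d, hd⟩ := TopologicalSpace.exists_dense_seq E
  choose G hGpos hGnorm hGval using fun n => exists_pos_functional |d n| (abs_nonneg _)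
  have hsum : Summable (fun n => ((2:ℝ)⁻¹) ^ n • G n) := by
    refine Summable.of_norm_bounded (g := fun n => ((2:ℝ)⁻¹) ^ n) ?_ ?_
    · exact summable_geometric_of_lt_one (by norm_num) (by norm_num)
    · intro n
      calc ‖((2:ℝ)⁻¹) ^ n • G n‖ ≤ ‖((2:ℝ)⁻¹) ^ n‖ * ‖G n‖ :=
            ContinuousLinearMap.opNorm_smul_le _ _
      _ ≤ ‖((2:ℝ)⁻¹) ^ n‖ * 1 :=
            mul_le_mul_of_nonneg_left (hGnorm n) (norm_nonneg _)
      _ = ((2:ℝ)⁻¹) ^ n := by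
            rw [mul_one, Real.norm_eq_abs, abs_of_pos (by positivity)]
  set f : E →L[ℝ] ℝ := ∑' n, ((2:ℝ)⁻¹) ^ n • G n with hfdef
  have happly : ∀ x : E, f x = ∑' n, ((2:ℝ)⁻¹) ^ n * G n x := by
    intro x
    have h := (ContinuousLinearMap.apply ℝ ℝ x).map_tsum hsum
    calc f x = ∑' n, (((2:ℝ)⁻¹) ^ n • G n) x := h
    _ = ∑' n, ((2:ℝ)⁻¹) ^ n * G n x :=
        tsum_congr fun n => by
          rw [ContinuousLinearMap.smul_apply, smul_eq_mul]
  have hsum2 : ∀ x : E, Summable (fun n => ((2:ℝ)⁻¹) ^ n * G n x) := by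
    intro x
    refine Summable.of_norm_bounded (g := fun n => ((2:ℝ)⁻¹) ^ n * ‖x‖) ?_ ?_
    · exact (summable_geometric_of_lt_one (by norm_num) (by norm_num)).mul_right _
    · intro n
      rw [Real.norm_eq_abs, abs_mul, abs_of_pos (a := ((2:ℝ)⁻¹) ^ n) (by positivity)]
      refine mul_le_mul_of_nonneg_left ?_ (by positivity)
      calc |G n x| = ‖G n x‖ := rfl
      _ ≤ ‖G n‖ * ‖x‖ := (G n).le_opNorm x
      _ ≤ 1 * ‖x‖ := mul_le_mul_of_nonneg_right (hGnorm n) (norm_nonneg _)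
      _ = ‖x‖ := one_mul _
  refine ⟨f, ?_, ?_⟩
  · intro x hx
    rw [happly]
    exact tsum_nonneg fun n => mul_nonneg (by positivity) (hGpos n x hx)
  · intro x hx
    have hnx : 0 < ‖x‖ := norm_pos_iff.mpr hx
    obtain ⟨n, hn⟩ : ∃ n, dist x (d n) < ‖x‖ / 8 := by
      have := hd.exists_dist_lt x (by positivity : (0:ℝ) < ‖x‖ / 8)
      obtain ⟨y, hy⟩ := this
      exact ⟨y, hy⟩
    have hclose : ‖|x| - |d n|‖ < ‖x‖ / 8 := by
      calc ‖|x| - |d n|‖ ≤ ‖x - d n‖ := norm_abs_sub_abs _ _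
      _ < ‖x‖ / 8 := by rwa [dist_eq_norm] at hn
    have hdn : ‖x‖ - ‖x‖ / 8 ≤ ‖|d n|‖ := by
      have h1 : ‖|x|‖ - ‖|d n|‖ ≤ ‖|x| - |d n|‖ := norm_sub_norm_le _ _
      rw [norm_abs_eq_norm] at h1
      linarith
    have hval : 5 / 16 * ‖x‖ ≤ G n |x| := by
      have h2 : G n |x| = G n |d n| + G n (|x| - |d n|) := by
        rw [← map_add]; congr 1; abel
      have h3 : |G n (|x| - |d n|)| ≤ ‖x‖ / 8 := by
        calc |G n (|x| - |d n|)| ≤ ‖G n‖ * ‖|x| - |d n|‖ := (G n).le_opNorm _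
        _ ≤ 1 * (‖x‖ / 8) :=
            mul_le_mul (hGnorm n) hclose.le (norm_nonneg _) zero_le_one
        _ = ‖x‖ / 8 := one_mul _
      have h4 := hGval n
      have h5 := abs_le.mp h3
      linarith
    have hterm : 0 < ((2:ℝ)⁻¹) ^ n * G n |x| :=
      mul_pos (by positivity) (by nlinarith)
    rw [happly]
    calc (0:ℝ) < ((2:ℝ)⁻¹) ^ n * G n |x| := hterm
    _ ≤ ∑' m, ((2:ℝ)⁻¹) ^ m * G m |x| := by
        refine Summable.le_tsum (hsum2 |x|) n ?_
        intro m _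
        exact mul_nonneg (by positivity) (hGpos m _ (abs_nonneg _))


lemma aux_seqCompact_isCompact {X : Type*} (m : PseudoMetricSpace X) {K : Set X}
    (h : @IsSeqCompact X m.toUniformSpace.toTopologicalSpace K) :
    @IsCompact X m.toUniformSpace.toTopologicalSpace K := by
  letI := m
  exact h.isCompact

lemma aux_unique {X : Type*} (m : PseudoMetricSpace X)
    (hm : ∀ x y : X, @dist X m.toDist x y = 0 → x = y)
    {u : ℕ → X} {x y : X}
    (hx : Tendsto u atTop (@nhds X m.toUniformSpace.toTopologicalSpace x))
    (hy : Tendsto u atTop (@nhds X m.toUniformSpace.toTopologicalSpace y)) : x = y := by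
  letI := m
  letI : MetricSpace X := { toPseudoMetricSpace := m, eq_of_dist_eq_zero := fun {a b} => hm a b }
  exact tendsto_nhds_unique hx hy

lemma aux_transfer {X : Type*} (m : PseudoMetricSpace X) (τ : TopologicalSpace X) (K : Set X)
    (hc : @IsCompact X m.toUniformSpace.toTopologicalSpace K)
    (hcont : ∀ (u : ℕ → X) (x : X), (∀ n, u n ∈ K) → x ∈ K →
      Tendsto u atTop (@nhds X m.toUniformSpace.toTopologicalSpace x) →
      Tendsto u atTop (@nhds X τ x)) :
    @IsCompact X τ K := by
  have hco : @ContinuousOn X X m.toUniformSpace.toTopologicalSpace τ id K := by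
    intro x hx
    unfold ContinuousWithinAt
    haveI : (@nhdsWithin X m.toUniformSpace.toTopologicalSpace x K).IsCountablyGenerated := by
      letI := m
      infer_instance
    rw [tendsto_iff_seq_tendsto]
    intro u hu
    have hmem : ∀ᶠ n in atTop, u n ∈ K :=
      hu (@self_mem_nhdsWithin X m.toUniformSpace.toTopologicalSpace x K)
    have htend : Tendsto u atTop (@nhds X m.toUniformSpace.toTopologicalSpace x) :=
      hu.mono_right (@nhdsWithin_le_nhds X m.toUniformSpace.toTopologicalSpace x K)
    obtain ⟨N, hN⟩ := eventually_atTop.mp hmem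
    have hv : Tendsto (fun n => u (n + N)) atTop (@nhds X τ x) := by
      refine hcont _ x (fun n => hN _ (by omega)) hx ?_
      exact htend.comp (tendsto_add_atTop_nat N)
    have := (tendsto_add_atTop_iff_nat (f := fun n => (id ∘ u) n)
      (l := @nhds X τ x) N).mp hv
    exact this
  have himg := @IsCompact.image_of_continuousOn X X m.toUniformSpace.toTopologicalSpace τ K id hc hco
  rwa [Set.image_id] at himg

/-- An absolutely weakly sequentially compact subset of a separable Banach lattice is
absolutely weakly compact. -/
theorem absWeakSeqCompact_compact_of_separable {E : Type*} [NormedAddCommGroup E] [Lattice E] [HasSolidNorm E] [IsOrderedAddMonoid E] [NormedSpace ℝ E] [PosSMulStrictMono ℝ E] [PosSMulReflectLT ℝ E] [CompleteSpace E]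
    [TopologicalSpace.SeparableSpace E] (K : Set E)
    (hK : @IsSeqCompact E (absWeakTopology E) K) : @IsCompact E (absWeakTopology E) K := by
  obtain ⟨f, hf, hstrict⟩ := exists_strictly_positive E
  have hle : absWeakTopology E ≤ (absSeminormDist f hf).toUniformSpace.toTopologicalSpace :=
    iInf_le _ (⟨f, hf⟩ : {f : E →L[ℝ] ℝ // ∀ x : E, 0 ≤ x → 0 ≤ f x})
  have hmono : ∀ (u : ℕ → E) (y : E), Tendsto u atTop (@nhds E (absWeakTopology E) y) →
      Tendsto u atTop (@nhds E (absSeminormDist f hf).toUniformSpace.toTopologicalSpace y) :=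
    fun u y h => h.mono_right (nhds_mono hle)
  have hsep : ∀ x y : E, @dist E (absSeminormDist f hf).toDist x y = 0 → x = y := by
    intro x y h
    by_contra hne
    have h2 := hstrict (x - y) (sub_ne_zero.mpr hne)
    have h3 : @dist E (absSeminormDist f hf).toDist x y = f |x - y| := rfl
    rw [h3] at h
    linarith
  have hseqm : @IsSeqCompact E (absSeminormDist f hf).toUniformSpace.toTopologicalSpace K := by
    intro u hu
    obtain ⟨a, haK, φ, hφ, hconv⟩ := hK hu
    exact ⟨a, haK, φ, hφ, hmono _ _ hconv⟩
  have hcm : @IsCompact E (absSeminormDist f hf).toUniformSpace.toTopologicalSpace K :=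
    aux_seqCompact_isCompact (absSeminormDist f hf) hseqm
  refine aux_transfer (absSeminormDist f hf) (absWeakTopology E) K hcm ?_
  intro u x hu hx h
  apply tendsto_of_subseq_tendsto
  intro ns hns
  obtain ⟨y, hyK, φ, hφ, hconv⟩ := hK (x := fun n => u (ns n)) (fun n => hu _)
  have h1 := hmono _ _ hconv
  have h2 : Tendsto (fun n => u (ns (φ n))) atTop
      (@nhds E (absSeminormDist f hf).toUniformSpace.toTopologicalSpace x) :=
    h.comp (hns.comp hφ.tendsto_atTop)
  have hyx : y = x := aux_unique (absSeminormDist f hf) hsep h1 h2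
  exact ⟨φ, hyx ▸ hconv⟩
end

section
/- For an uncountable set Γ and 1 < p < ∞, the closed unit ball of ℓ_p(Γ) is compact in the absolute weak topology |σ|(ℓ_p(Γ), ℓ_q(Γ)), where 1/p + 1/q = 1. -/
set_option linter.unusedSectionVars false

open Filter Topology Pointwise MeasureTheory
open scoped ENNReal


open scoped Classical NNReal
set_option maxHeartbeats 1000000

section Aux

variable {Γ : Type*} [MeasurableSpace Γ] [MeasurableSingletonClass Γ]
variable {p : ℝ≥0∞} [Fact (1 ≤ p)]

namespace AWAux

lemma ae_count_top : MeasureTheory.ae (Measure.count : Measure Γ) = ⊤ := by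
  rw [MeasureTheory.ae_eq_top]; intro a; simp

lemma eq_of_ae {β : Type*} {f g : Γ → β} (h : f =ᵐ[(Measure.count : Measure Γ)] g) :
    f = g := by
  funext γ
  rw [Filter.EventuallyEq, ae_count_top, Filter.eventually_top] at h
  exact h γ

variable (w v : Lp ℝ p (Measure.count : Measure Γ))

lemma coe_injective (h : ⇑w = ⇑v) : w = v := by
  apply Lp.ext (h ▸ Filter.EventuallyEq.rfl)

lemma coe_zero : ⇑(0 : Lp ℝ p (Measure.count : Measure Γ)) = (fun _ => (0:ℝ)) :=
  eq_of_ae (Lp.coeFn_zero ℝ p _)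

lemma coe_add : ⇑(w + v) = fun γ => w γ + v γ := eq_of_ae (Lp.coeFn_add w v)

lemma coe_sub : ⇑(w - v) = fun γ => w γ - v γ := eq_of_ae (Lp.coeFn_sub w v)

lemma coe_smul (a : ℝ) : ⇑(a • w) = fun γ => a * w γ := eq_of_ae (Lp.coeFn_smul a w)

lemma coe_abs : ⇑|w| = fun γ => |w γ| := eq_of_ae (Lp.coeFn_abs w)

lemma le_iff : w ≤ v ↔ ∀ γ, w γ ≤ v γ := by
  rw [← Lp.coeFn_le, Filter.EventuallyLE, ae_count_top, Filter.eventually_top]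

noncomputable def coeHom : Lp ℝ p (Measure.count : Measure Γ) →+ (Γ → ℝ) where
  toFun := fun w => ⇑w
  map_zero' := coe_zero
  map_add' := fun w v => by
    funext γ; show (w + v) γ = w γ + v γ; rw [coe_add]

lemma coe_sum {ι : Type*} (s : Finset ι) (g : ι → Lp ℝ p (Measure.count : Measure Γ)) :
    ⇑(∑ i ∈ s, g i) = fun γ => ∑ i ∈ s, g i γ := by
  have := map_sum (coeHom (Γ := Γ) (p := p)) g s
  simp only [coeHom, AddMonoidHom.coe_mk, ZeroHom.coe_mk] at this
  rw [this]; funext γ; simp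

/-- The key `ℓ^p` norm formula for `Lp` of the counting measure. -/
lemma hasSum_abs_rpow (hp' : p ≠ ∞) :
    HasSum (fun γ => |w γ| ^ p.toReal) (‖w‖ ^ p.toReal) := by
  have hp0 : p ≠ 0 := (zero_lt_one.trans_le (Fact.out : 1 ≤ p)).ne'
  have hc : 0 < p.toReal := ENNReal.toReal_pos hp0 hp'
  have hsnorm : eLpNorm (⇑w) p (Measure.count : Measure Γ)
      = (∑' γ, (‖w γ‖₊ : ℝ≥0∞) ^ p.toReal) ^ (1 / p.toReal) := by
    rw [eLpNorm_eq_lintegral_rpow_enorm_toReal hp0 hp', lintegral_count]; rfl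
  set T : ℝ≥0∞ := ∑' γ, (‖w γ‖₊ : ℝ≥0∞) ^ p.toReal with hT
  have hTtop : T ≠ ∞ := by
    intro h
    have h2 := Lp.eLpNorm_ne_top w
    rw [hsnorm, h, ENNReal.top_rpow_of_pos (by positivity)] at h2
    exact h2 rfl
  have hTcoe : T = ∑' γ, ((‖w γ‖₊ ^ p.toReal : ℝ≥0) : ℝ≥0∞) := by
    simp [hT, ENNReal.coe_rpow_of_nonneg _ hc.le]
  have hsum : Summable (fun γ => (‖w γ‖₊ ^ p.toReal : ℝ≥0)) :=
    ENNReal.tsum_coe_ne_top_iff_summable.1 (hTcoe ▸ hTtop)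
  set S : ℝ≥0 := ∑' γ, (‖w γ‖₊ ^ p.toReal : ℝ≥0) with hS
  have h2 : HasSum (fun γ => |w γ| ^ p.toReal) (S : ℝ) := by
    have h3 := NNReal.hasSum_coe.2 hsum.hasSum
    have h4 : (fun γ => |w γ| ^ p.toReal)
        = fun γ => ((‖w γ‖₊ ^ p.toReal : ℝ≥0) : ℝ) := by
      funext γ; rw [NNReal.coe_rpow, coe_nnnorm, Real.norm_eq_abs]
    rw [h4]; exact h3
  have hnorm : ‖w‖ = T.toReal ^ (1 / p.toReal) := by
    rw [Lp.norm_def, hsnorm, ← ENNReal.toReal_rpow]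
  have hTr : T.toReal = (S : ℝ) := by
    rw [hTcoe, ← ENNReal.coe_tsum hsum, ENNReal.coe_toReal]
  have h5 : ‖w‖ ^ p.toReal = T.toReal := by
    rw [hnorm, ← Real.rpow_mul ENNReal.toReal_nonneg, one_div_mul_cancel hc.ne',
      Real.rpow_one]
  rw [h5, hTr]; exact h2

lemma sum_rpow_le_norm (hp' : p ≠ ∞) (s : Finset Γ) :
    ∑ γ ∈ s, |w γ| ^ p.toReal ≤ ‖w‖ ^ p.toReal :=
  sum_le_hasSum s (fun γ _ => Real.rpow_nonneg (abs_nonneg _) _) (hasSum_abs_rpow w hp')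

lemma toReal_pos (hp' : p ≠ ∞) : 0 < p.toReal :=
  ENNReal.toReal_pos (zero_lt_one.trans_le (Fact.out : 1 ≤ p)).ne' hp'

lemma abs_eval_le_norm (hp' : p ≠ ∞) (γ : Γ) : |w γ| ≤ ‖w‖ := by
  have h := le_hasSum (hasSum_abs_rpow w hp') γ
    (fun γ' _ => Real.rpow_nonneg (abs_nonneg _) _)
  exact (Real.rpow_le_rpow_iff (abs_nonneg _) (norm_nonneg _) (toReal_pos hp')).1 h

lemma norm_le_iff (hp' : p ≠ ∞) {r : ℝ} (hr : 0 ≤ r) :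
    ‖w‖ ≤ r ↔ ∑' γ, |w γ| ^ p.toReal ≤ r ^ p.toReal := by
  rw [(hasSum_abs_rpow w hp').tsum_eq]
  exact (Real.rpow_le_rpow_iff (norm_nonneg _) hr (toReal_pos hp')).symm

/-- Truncation of an element of `Lp` to a finite set. -/
noncomputable def trunc (s : Finset Γ) : Lp ℝ p (Measure.count : Measure Γ) :=
  MemLp.toLp _ ((Lp.memLp w).indicator (s.countable_toSet.measurableSet))

lemma coe_trunc (s : Finset Γ) : ⇑(trunc w s) = Set.indicator ↑s ⇑w :=
  eq_of_ae (MemLp.coeFn_toLp _)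

/-- The canonical basis vector of `Lp` of counting measure. -/
noncomputable def single (γ : Γ) : Lp ℝ p (Measure.count : Measure Γ) :=
  indicatorConstLp p (measurableSet_singleton γ) (by simp) (1 : ℝ)

lemma coe_single (γ : Γ) :
    ⇑(single (p := p) γ) = Set.indicator {γ} (fun _ => (1:ℝ)) :=
  eq_of_ae indicatorConstLp_coeFn

lemma single_nonneg (γ : Γ) : 0 ≤ single (p := p) γ := by
  refine (le_iff _ _).2 fun γ' => ?_
  rw [coe_zero, coe_single]
  exact Set.indicator_apply_nonneg (fun _ => zero_le_one)

lemma trunc_eq_sum (s : Finset Γ) :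
    trunc w s = ∑ γ ∈ s, (w γ) • single (p := p) γ := by
  apply coe_injective
  rw [coe_trunc, coe_sum]
  funext γ'
  rw [Finset.sum_congr rfl (fun γ (_ : γ ∈ s) => by
    rw [coe_smul, coe_single] :
    ∀ γ ∈ s, (⇑(w γ • single (p := p) γ)) γ'
      = (fun γ0 => w γ * Set.indicator {γ} (fun _ => (1:ℝ)) γ0) γ')]
  by_cases h : γ' ∈ s
  · rw [Set.indicator_of_mem (by exact h)]
    rw [Finset.sum_eq_single γ']
    · simp
    · intro b _ hb
      have hb' : γ' ∉ ({b} : Set Γ) := by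
        simp only [Set.mem_singleton_iff]; exact fun hc => hb hc.symm
      simp [Set.indicator_of_notMem hb']
    · intro hγ; exact absurd h hγ
  · rw [Set.indicator_of_notMem (by exact h)]
    apply (Finset.sum_eq_zero _).symm
    intro b hb
    have hb' : γ' ∉ ({b} : Set Γ) := by
      simp only [Set.mem_singleton_iff]; rintro rfl; exact h hb
    simp [Set.indicator_of_notMem hb']

lemma coe_sub_trunc (s : Finset Γ) (γ : Γ) :
    (w - trunc w s) γ = if γ ∈ s then 0 else w γ := by
  rw [coe_sub, coe_trunc]
  by_cases h : γ ∈ s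
  · simp [Set.indicator_of_mem (Finset.mem_coe.2 h), h]
  · simp [Set.indicator_of_notMem (fun hc => h (Finset.mem_coe.1 hc)), h]

lemma norm_sub_trunc (hp' : p ≠ ∞) (s : Finset Γ) :
    ‖w - trunc w s‖ ^ p.toReal = ‖w‖ ^ p.toReal - ∑ γ ∈ s, |w γ| ^ p.toReal := by
  have hc := toReal_pos (p := p) hp'
  have hw := hasSum_abs_rpow w hp'
  have hind : HasSum (fun γ => if γ ∈ s then |w γ| ^ p.toReal else 0)
      (∑ γ ∈ s, |w γ| ^ p.toReal) := by
    have := hasSum_sum_of_ne_finset_zero (L := SummationFilter.unconditional _) (s := s)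
      (f := fun γ => if γ ∈ s then |w γ| ^ p.toReal else 0)
      (fun b hb => by simp [hb])
    simpa [Finset.sum_congr rfl (fun γ hγ => by simp [hγ] :
      ∀ γ ∈ s, (if γ ∈ s then |w γ| ^ p.toReal else 0) = |w γ| ^ p.toReal)] using this
  have hdiff := hw.sub hind
  have hfun : (fun γ => |w γ| ^ p.toReal - if γ ∈ s then |w γ| ^ p.toReal else 0)
      = fun γ => |(w - trunc w s) γ| ^ p.toReal := by
    funext γ
    rw [coe_sub_trunc]
    by_cases h : γ ∈ s
    · simp [h, Real.zero_rpow hc.ne']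
    · simp [h]
  rw [hfun] at hdiff
  exact (hasSum_abs_rpow (w - trunc w s) hp').unique hdiff

lemma exists_trunc_close (hp' : p ≠ ∞) {η : ℝ} (hη : 0 < η) :
    ∃ s : Finset Γ, ‖w - trunc w s‖ ≤ η := by
  have hc := toReal_pos (p := p) hp'
  have hw := hasSum_abs_rpow w hp'
  have hev : ∀ᶠ s : Finset Γ in atTop,
      dist (∑ γ ∈ s, |w γ| ^ p.toReal) (‖w‖ ^ p.toReal) < η ^ p.toReal := by
    have := Metric.tendsto_nhds.1 hw (η ^ p.toReal) (Real.rpow_pos_of_pos hη _)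
    exact this
  obtain ⟨s, hs⟩ := hev.exists
  refine ⟨s, ?_⟩
  rw [← Real.rpow_le_rpow_iff (norm_nonneg _) hη.le hc, norm_sub_trunc w hp' s]
  rw [Real.dist_eq, abs_lt] at hs
  linarith [hs.1]

lemma coe_sum_single (s : Finset Γ) (a : Γ → ℝ) (γ' : Γ) :
    (∑ γ ∈ s, a γ • single (p := p) γ) γ' = if γ' ∈ s then a γ' else 0 := by
  rw [coe_sum]
  show ∑ γ ∈ s, (⇑(a γ • single (p := p) γ)) γ' = _
  rw [Finset.sum_congr rfl (fun γ (_ : γ ∈ s) => by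
    rw [coe_smul, coe_single] :
    ∀ γ ∈ s, (⇑(a γ • single (p := p) γ)) γ'
      = (fun γ0 => a γ * Set.indicator {γ} (fun _ => (1:ℝ)) γ0) γ')]
  by_cases h : γ' ∈ s
  · simp only [h, if_true]
    rw [Finset.sum_eq_single γ']
    · simp
    · intro b _ hb
      have hb' : γ' ∉ ({b} : Set Γ) := by
        simp only [Set.mem_singleton_iff]; exact fun hc => hb hc.symm
      simp [Set.indicator_of_notMem hb']
    · intro hγ; exact absurd h hγ
  · simp only [h, if_false]
    apply Finset.sum_eq_zero
    intro b hb
    have hb' : γ' ∉ ({b} : Set Γ) := by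
      simp only [Set.mem_singleton_iff]; rintro rfl; exact h hb
    simp [Set.indicator_of_notMem hb']

lemma norm_sum_single (hp' : p ≠ ∞) (s : Finset Γ) (a : Γ → ℝ) :
    ‖∑ γ ∈ s, a γ • single (p := p) γ‖ ^ p.toReal = ∑ γ ∈ s, |a γ| ^ p.toReal := by
  have hc := toReal_pos (p := p) hp'
  have hind : HasSum (fun γ => if γ ∈ s then |a γ| ^ p.toReal else 0)
      (∑ γ ∈ s, |a γ| ^ p.toReal) := by
    have h0 := hasSum_sum_of_ne_finset_zero (L := SummationFilter.unconditional _) (s := s)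
      (f := fun γ => if γ ∈ s then |a γ| ^ p.toReal else 0)
      (fun b hb => by simp [hb])
    simpa [Finset.sum_congr rfl (fun γ hγ => by simp [hγ] :
      ∀ γ ∈ s, (if γ ∈ s then |a γ| ^ p.toReal else 0) = |a γ| ^ p.toReal)] using h0
  have hfun : (fun γ => |(∑ γ0 ∈ s, a γ0 • single (p := p) γ0) γ| ^ p.toReal)
      = fun γ => if γ ∈ s then |a γ| ^ p.toReal else 0 := by
    funext γ
    rw [coe_sum_single]
    by_cases h : γ ∈ s
    · simp [h]
    · simp [h, Real.zero_rpow hc.ne']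
  have h1 := hasSum_abs_rpow (∑ γ ∈ s, a γ • single (p := p) γ) hp'
  rw [hfun] at h1
  exact h1.unique hind

/-- Construction of an element of the unit ball from coordinatewise data. -/
lemma exists_toLp (hp' : p ≠ ∞) (L : Γ → ℝ)
    (hL : ∀ s : Finset Γ, ∑ γ ∈ s, |L γ| ^ p.toReal ≤ 1) :
    ∃ z : Lp ℝ p (Measure.count : Measure Γ), ⇑z = L ∧ ‖z‖ ≤ 1 := by
  have hc := toReal_pos (p := p) hp'
  have hp0 : p ≠ 0 := (zero_lt_one.trans_le (Fact.out : 1 ≤ p)).ne'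
  have hsum : Summable (fun γ => |L γ| ^ p.toReal) :=
    summable_of_sum_le (fun γ => Real.rpow_nonneg (abs_nonneg _) _) hL
  have hsupp : (Function.support L).Countable := by
    refine hsum.countable_support.mono ?_
    intro γ hγ
    simp only [Function.mem_support] at hγ ⊢
    exact fun hc0 =>
      hγ (abs_eq_zero.1 ((Real.rpow_eq_zero (abs_nonneg _) hc.ne').1 hc0))
  have hmeas : Measurable L := by
    apply Measurable.measurable_of_countable_ne measurable_zero
    refine hsupp.mono ?_
    intro γ hγ
    simp only [Set.mem_setOf_eq, Pi.zero_apply] at hγ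
    exact fun h => hγ h.symm
  have hsm : AEStronglyMeasurable L (Measure.count : Measure Γ) :=
    hmeas.stronglyMeasurable.aestronglyMeasurable
  have hsumnn : Summable (fun γ => (‖L γ‖₊ ^ p.toReal : ℝ≥0)) := by
    rw [← NNReal.summable_coe]
    have hfun : (fun γ => ((‖L γ‖₊ ^ p.toReal : ℝ≥0) : ℝ))
        = fun γ => |L γ| ^ p.toReal := by
      funext γ; rw [NNReal.coe_rpow, coe_nnnorm, Real.norm_eq_abs]
    rw [hfun]; exact hsum
  have hmem : MemLp L p (Measure.count : Measure Γ) := by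
    refine ⟨hsm, ?_⟩
    rw [eLpNorm_eq_lintegral_rpow_enorm_toReal hp0 hp', lintegral_count]
    refine ENNReal.rpow_lt_top_of_nonneg (by positivity) ?_
    simp only [enorm_eq_nnnorm]
    rw [show (fun γ => (‖L γ‖₊ : ℝ≥0∞) ^ p.toReal)
        = fun γ => ((‖L γ‖₊ ^ p.toReal : ℝ≥0) : ℝ≥0∞) from by
      funext γ; rw [ENNReal.coe_rpow_of_nonneg _ hc.le]]
    exact ENNReal.tsum_coe_ne_top_iff_summable.2 hsumnn
  refine ⟨hmem.toLp L, eq_of_ae (MemLp.coeFn_toLp hmem), ?_⟩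
  rw [norm_le_iff _ hp' zero_le_one, Real.one_rpow]
  have hcoe : ⇑(hmem.toLp L) = L := eq_of_ae (MemLp.coeFn_toLp hmem)
  rw [hcoe]
  exact Summable.tsum_le_of_sum_le hsum hL

/-- Uniform smallness of a positive functional off a suitable finite set. -/
lemma exists_tail_control (hp : 1 < p) (hp' : p ≠ ∞)
    (f : Lp ℝ p (Measure.count : Measure Γ) →L[ℝ] ℝ)
    (hf : ∀ x, 0 ≤ x → 0 ≤ f x) {δ : ℝ} (hδ : 0 < δ) :
    ∃ s : Finset Γ, ∀ w : Lp ℝ p (Measure.count : Measure Γ),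
      0 ≤ w → (∀ γ ∈ s, w γ = 0) → f w ≤ δ * ‖w‖ := by
  have hc := toReal_pos (p := p) hp'
  have hc1 : 1 < p.toReal := by
    rw [← ENNReal.toReal_one]
    exact ENNReal.toReal_strict_mono hp' hp
  have hconj : (p.toReal).HolderConjugate (Real.conjExponent p.toReal) :=
    Real.HolderConjugate.conjExponent hc1
  set q := Real.conjExponent p.toReal with hqdef
  have hq0 : 0 < q := hconj.symm.pos
  set g : Γ → ℝ := fun γ => f (single γ) with hgdef
  have hg0 : ∀ γ, 0 ≤ g γ := fun γ => hf _ (single_nonneg γ)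
  -- Step A : uniform bound for partial sums of `g ^ q`
  have hA : ∀ s : Finset Γ, ∑ γ ∈ s, g γ ^ q ≤ ‖f‖ ^ q := by
    intro s
    set u : Lp ℝ p (Measure.count : Measure Γ) :=
      ∑ γ ∈ s, (g γ ^ (q - 1)) • single γ with hu
    have hfu : f u = ∑ γ ∈ s, g γ ^ q := by
      rw [hu, map_sum]
      refine Finset.sum_congr rfl fun γ _ => ?_
      rw [ContinuousLinearMap.map_smul, smul_eq_mul]
      rcases eq_or_lt_of_le (hg0 γ) with h0 | h0
      · rw [show f (single γ) = g γ from rfl, ← h0, mul_zero,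
          Real.zero_rpow hq0.ne']
      · calc (g γ ^ (q - 1)) • f (single γ)
            = g γ ^ (q - 1) * g γ ^ (1:ℝ) := by rw [Real.rpow_one]; rfl
          _ = g γ ^ q := by rw [← Real.rpow_add h0]; ring_nf
    have hnormu : ‖u‖ ^ p.toReal = ∑ γ ∈ s, g γ ^ q := by
      rw [hu, norm_sum_single hp']
      refine Finset.sum_congr rfl fun γ _ => ?_
      rw [abs_of_nonneg (Real.rpow_nonneg (hg0 γ) _), ← Real.rpow_mul (hg0 γ),
        hconj.symm.sub_one_mul_conj]
    set A := ∑ γ ∈ s, g γ ^ q with hAdef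
    have hA0 : 0 ≤ A :=
      Finset.sum_nonneg fun γ _ => Real.rpow_nonneg (hg0 γ) _
    rcases eq_or_lt_of_le hA0 with h0 | h0
    · rw [← h0]; exact Real.rpow_nonneg (norm_nonneg f) q
    have hAle : A ≤ ‖f‖ * A ^ (1/p.toReal) := by
      have h1 : f u ≤ ‖f‖ * ‖u‖ := le_trans (le_abs_self _) (f.le_opNorm u)
      have h2 : ‖u‖ = A ^ (1/p.toReal) := by
        rw [show ‖u‖ = (‖u‖ ^ p.toReal) ^ (1/p.toReal) from by
          rw [← Real.rpow_mul (norm_nonneg u), mul_one_div_cancel hc.ne', Real.rpow_one],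
          hnormu]
      rw [hfu] at h1
      rw [← h2]; exact h1
    have hstep : A ^ (1/q) ≤ ‖f‖ := by
      have hA1c : (0:ℝ) < A ^ (1/p.toReal) := Real.rpow_pos_of_pos h0 _
      have hsplit : A = A ^ (1/q) * A ^ (1/p.toReal) := by
        rw [← Real.rpow_add h0, one_div, one_div, add_comm,
          Real.HolderConjugate.inv_add_inv_eq_one hconj, Real.rpow_one]
      have h5 : A ^ (1/q) * A ^ (1/p.toReal) ≤ ‖f‖ * A ^ (1/p.toReal) := by
        rw [← hsplit]; exact hAle
      exact le_of_mul_le_mul_right h5 hA1c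
    calc A = (A ^ (1/q)) ^ q := by
          rw [← Real.rpow_mul hA0, one_div_mul_cancel hq0.ne', Real.rpow_one]
      _ ≤ ‖f‖ ^ q := Real.rpow_le_rpow (Real.rpow_nonneg hA0 _) hstep hq0.le
  -- Step B : tail of `g ^ q` can be made small
  have hsumq : Summable (fun γ => g γ ^ q) :=
    summable_of_sum_le (fun γ => Real.rpow_nonneg (hg0 γ) _) hA
  obtain ⟨s₀, hs₀⟩ : ∃ s₀ : Finset Γ,
      (∑' γ, g γ ^ q) - ∑ γ ∈ s₀, g γ ^ q < δ ^ q := by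
    have h1 := Metric.tendsto_nhds.1 hsumq.hasSum (δ ^ q)
      (Real.rpow_pos_of_pos hδ _)
    obtain ⟨s₀, h⟩ := h1.exists
    rw [Real.dist_eq, abs_lt] at h
    exact ⟨s₀, by linarith [h.1]⟩
  have htail : ∀ t : Finset Γ, (∀ γ ∈ t, γ ∉ s₀) → ∑ γ ∈ t, g γ ^ q ≤ δ ^ q := by
    intro t ht
    have hdisj : Disjoint s₀ t := Finset.disjoint_left.2 fun γ h1 h2 => ht γ h2 h1
    have h1 : ∑ γ ∈ s₀ ∪ t, g γ ^ q ≤ ∑' γ, g γ ^ q :=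
      Summable.sum_le_tsum _ (fun γ _ => Real.rpow_nonneg (hg0 γ) _) hsumq
    rw [Finset.sum_union hdisj] at h1
    linarith
  -- Step C : conclusion
  refine ⟨s₀, fun w hw0 hwz => ?_⟩
  have hwnn : ∀ γ, 0 ≤ w γ := by
    intro γ
    have h1 := (le_iff 0 w).1 hw0 γ
    rwa [coe_zero] at h1
  refine le_of_forall_pos_le_add fun ε hε => ?_
  obtain ⟨t, ht⟩ := exists_trunc_close w hp' (div_pos hε (by positivity) :
    (0:ℝ) < ε / (‖f‖ + 1))
  have hsplit : f w = f (w - trunc w t) + f (trunc w t) := by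
    rw [← map_add]; congr 1; abel
  have h1 : f (w - trunc w t) ≤ ε := by
    calc f (w - trunc w t) ≤ ‖f‖ * ‖w - trunc w t‖ :=
          le_trans (le_abs_self _) (f.le_opNorm _)
      _ ≤ ‖f‖ * (ε / (‖f‖ + 1)) := by
          apply mul_le_mul_of_nonneg_left ht (norm_nonneg f)
      _ ≤ ε := by
          rw [mul_div_assoc']
          rw [div_le_iff₀ (by positivity)]
          nlinarith [norm_nonneg f]
  have h2 : f (trunc w t) ≤ δ * ‖w‖ := by
    rw [trunc_eq_sum, map_sum]
    have hterm : ∀ γ ∈ t, f (w γ • single γ) = w γ * g γ := fun γ _ => by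
      rw [ContinuousLinearMap.map_smul, smul_eq_mul]
    rw [Finset.sum_congr rfl hterm]
    have hsub : ∑ γ ∈ t, w γ * g γ = ∑ γ ∈ t \ s₀, w γ * g γ := by
      refine (Finset.sum_subset (Finset.sdiff_subset) fun γ hγt hγn => ?_).symm
      have : γ ∈ s₀ := by
        by_contra h
        exact hγn (Finset.mem_sdiff.2 ⟨hγt, h⟩)
      rw [hwz γ this, zero_mul]
    rw [hsub]
    have hhold := Real.inner_le_Lp_mul_Lq (t \ s₀) (fun γ => w γ) g hconj
    refine le_trans hhold ?_
    have hb1 : (∑ γ ∈ t \ s₀, |w γ| ^ p.toReal) ^ (1/p.toReal) ≤ ‖w‖ := by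
      have h3 : ∑ γ ∈ t \ s₀, |w γ| ^ p.toReal ≤ ‖w‖ ^ p.toReal := sum_rpow_le_norm w hp' _
      calc (∑ γ ∈ t \ s₀, |w γ| ^ p.toReal) ^ (1/p.toReal) ≤ (‖w‖ ^ p.toReal) ^ (1/p.toReal) :=
            Real.rpow_le_rpow
              (Finset.sum_nonneg fun γ _ => Real.rpow_nonneg (abs_nonneg _) _)
              h3 (by positivity)
        _ = ‖w‖ := by
            rw [← Real.rpow_mul (norm_nonneg w), mul_one_div_cancel hc.ne',
              Real.rpow_one]
    have hb2 : (∑ γ ∈ t \ s₀, |g γ| ^ q) ^ (1/q) ≤ δ := by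
      have h4 : ∑ γ ∈ t \ s₀, |g γ| ^ q ≤ δ ^ q := by
        rw [Finset.sum_congr rfl (fun γ _ => by rw [abs_of_nonneg (hg0 γ)] :
          ∀ γ ∈ t \ s₀, |g γ| ^ q = g γ ^ q)]
        exact htail _ (fun γ hγ => (Finset.mem_sdiff.1 hγ).2)
      calc (∑ γ ∈ t \ s₀, |g γ| ^ q) ^ (1/q) ≤ (δ ^ q) ^ (1/q) :=
            Real.rpow_le_rpow
              (Finset.sum_nonneg fun γ _ => Real.rpow_nonneg (abs_nonneg _) _)
              h4 (by positivity)
        _ = δ := by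
            rw [← Real.rpow_mul hδ.le, mul_one_div_cancel hq0.ne', Real.rpow_one]
    calc (∑ γ ∈ t \ s₀, |w γ| ^ p.toReal) ^ (1/p.toReal) * (∑ γ ∈ t \ s₀, |g γ| ^ q) ^ (1/q)
        ≤ ‖w‖ * δ := by
          apply mul_le_mul hb1 hb2
            (Real.rpow_nonneg (Finset.sum_nonneg fun γ _ =>
              Real.rpow_nonneg (abs_nonneg _) _) _) (norm_nonneg w)
      _ = δ * ‖w‖ := mul_comm _ _
  linarith [hsplit, h1, h2]

end AWAux

end Aux

theorem lp_unitBall_absWeakCompact' (Γ : Type*) [MeasurableSpace Γ]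
    [MeasurableSingletonClass Γ]
    (p : ℝ≥0∞) [Fact (1 ≤ p)] (hp : 1 < p) (hp' : p ≠ ∞) :
    @IsCompact (Lp ℝ p (Measure.count : Measure Γ))
      (absWeakTopology (Lp ℝ p (Measure.count : Measure Γ)))
      (Metric.closedBall 0 1) := by
  classical
  have hc : 0 < p.toReal := AWAux.toReal_pos hp'
  refine (@isCompact_iff_ultrafilter_le_nhds
    (Lp ℝ p (Measure.count : Measure Γ))
    (absWeakTopology (Lp ℝ p (Measure.count : Measure Γ))) _).2 fun F hF => ?_
  have hball : Metric.closedBall (0 : Lp ℝ p (Measure.count : Measure Γ)) 1 ∈ F :=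
    le_principal_iff.1 hF
  have hnorm1 : ∀ᶠ x : Lp ℝ p (Measure.count : Measure Γ) in F, ‖x‖ ≤ 1 := by
    filter_upwards [hball] with x hx
    rwa [Metric.mem_closedBall, dist_zero_right] at hx
  -- coordinatewise limits
  have hev : ∀ γ : Γ, ∃ l : ℝ,
      Tendsto (fun x : Lp ℝ p (Measure.count : Measure Γ) => x γ) F (nhds l) := by
    intro γ
    have hmem : Set.Icc (-1:ℝ) 1 ∈
        Ultrafilter.map (fun x : Lp ℝ p (Measure.count : Measure Γ) => x γ) F := by
      rw [Ultrafilter.mem_map]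
      filter_upwards [hnorm1] with x hx
      have h1 : |x γ| ≤ 1 := le_trans (AWAux.abs_eval_le_norm x hp' γ) hx
      exact abs_le.1 h1
    obtain ⟨l, _, hl⟩ := isCompact_Icc.ultrafilter_le_nhds _ (le_principal_iff.2 hmem)
    exact ⟨l, hl⟩
  choose L hL using hev
  -- the candidate limit
  have hLsum : ∀ s : Finset Γ, ∑ γ ∈ s, |L γ| ^ p.toReal ≤ 1 := by
    intro s
    have htend : Tendsto (fun x : Lp ℝ p (Measure.count : Measure Γ) =>
        ∑ γ ∈ s, |x γ| ^ p.toReal) F (nhds (∑ γ ∈ s, |L γ| ^ p.toReal)) := by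
      apply tendsto_finset_sum
      intro γ _
      exact ((continuous_abs.rpow_const (fun y => Or.inr hc.le)).tendsto (L γ)).comp (hL γ)
    refine le_of_tendsto htend ?_
    filter_upwards [hnorm1] with x hx
    calc ∑ γ ∈ s, |x γ| ^ p.toReal ≤ ‖x‖ ^ p.toReal := AWAux.sum_rpow_le_norm x hp' s
      _ ≤ 1 := Real.rpow_le_one (norm_nonneg _) hx hc.le
  obtain ⟨z, hz, hznorm⟩ := AWAux.exists_toLp hp' L hLsum
  refine ⟨z, Metric.mem_closedBall.2 (by rwa [dist_zero_right]), ?_⟩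
  -- convergence in the absolute weak topology
  have hunfold : (absWeakTopology (Lp ℝ p (Measure.count : Measure Γ)))
      = ⨅ f : {f : Lp ℝ p (Measure.count : Measure Γ) →L[ℝ] ℝ //
          ∀ x, 0 ≤ x → 0 ≤ f x},
        (absSeminormDist f.1 f.2).toUniformSpace.toTopologicalSpace := rfl
  rw [hunfold, _root_.nhds_iInf]
  refine le_iInf fun fp => ?_
  rw [Filter.HasBasis.ge_iff (@Metric.nhds_basis_ball _ (absSeminormDist fp.1 fp.2) z)]
  intro ε hε
  obtain ⟨f, hf⟩ := fp
  -- tail control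
  obtain ⟨s, hs⟩ := AWAux.exists_tail_control hp hp' f hf
    (show (0:ℝ) < ε/8 by linarith)
  -- the finite part tends to zero
  have htrunc : Tendsto (fun x : Lp ℝ p (Measure.count : Measure Γ) =>
      ∑ γ ∈ s, |x γ - z γ| * f (AWAux.single γ)) F (nhds 0) := by
    have h0 : (0:ℝ) = ∑ γ ∈ s, |L γ - z γ| * f (AWAux.single γ) := by
      rw [hz]; simp
    rw [h0]
    apply tendsto_finset_sum
    intro γ _
    exact (((hL γ).sub_const (z γ)).abs).mul_const _
  have hsmall : ∀ᶠ x : Lp ℝ p (Measure.count : Measure Γ) in F,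
      ∑ γ ∈ s, |x γ - z γ| * f (AWAux.single γ) < ε/2 := by
    have h1 : Set.Iio (ε/2) ∈ nhds (0:ℝ) := Iio_mem_nhds (by linarith)
    exact htrunc.eventually (eventually_mem_set.2 h1)
  -- main estimate
  suffices hsuff : ∀ᶠ x : Lp ℝ p (Measure.count : Measure Γ) in F,
      f |x - z| < ε by
    refine Filter.mem_of_superset hsuff ?_
    intro x hx
    exact hx
  filter_upwards [hnorm1, hsmall] with x hx1 hx2
  set w : Lp ℝ p (Measure.count : Measure Γ) := |x - z| with hw
  have hwcoe : ∀ γ, w γ = |x γ - z γ| := by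
    intro γ
    rw [hw, AWAux.coe_abs, AWAux.coe_sub]
  set r : Lp ℝ p (Measure.count : Measure Γ) := w - AWAux.trunc w s with hr
  have hrcoe : ∀ γ, r γ = if γ ∈ s then 0 else |x γ - z γ| := by
    intro γ
    rw [hr, AWAux.coe_sub_trunc]
    by_cases h : γ ∈ s <;> simp [h, hwcoe]
  have hr0 : 0 ≤ r := by
    refine (AWAux.le_iff _ _).2 fun γ => ?_
    rw [AWAux.coe_zero, hrcoe]
    by_cases h : γ ∈ s <;> simp [h, abs_nonneg]
  have hrz : ∀ γ ∈ s, r γ = 0 := fun γ hγ => by rw [hrcoe]; simp [hγ]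
  have hrnorm : ‖r‖ ≤ ‖x - z‖ := by
    rw [← Real.rpow_le_rpow_iff (norm_nonneg _) (norm_nonneg _) hc]
    have h1 := AWAux.hasSum_abs_rpow r hp'
    have h2 := AWAux.hasSum_abs_rpow (x - z) hp'
    refine hasSum_le (fun γ => ?_) h1 h2
    rw [hrcoe, AWAux.coe_sub]
    by_cases h : γ ∈ s
    · simp only [h, if_true, abs_zero]
      rw [Real.zero_rpow hc.ne']
      exact Real.rpow_nonneg (abs_nonneg _) _
    · simp [h]
  have hxz2 : ‖x - z‖ ≤ 2 := by
    calc ‖x - z‖ ≤ ‖x‖ + ‖z‖ := norm_sub_le x z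
      _ ≤ 2 := by linarith
  have hsplit : f w = f (AWAux.trunc w s) + f r := by
    rw [hr, ← map_add]
    congr 1
    abel
  have hfr : f r ≤ (ε/8) * ‖r‖ := hs r hr0 hrz
  have hftrunc : f (AWAux.trunc w s) = ∑ γ ∈ s, |x γ - z γ| * f (AWAux.single γ) := by
    rw [AWAux.trunc_eq_sum, map_sum]
    refine Finset.sum_congr rfl fun γ _ => ?_
    rw [ContinuousLinearMap.map_smul, smul_eq_mul, hwcoe]
  have hdistlt : f w < ε := by
    have h3 : ‖r‖ ≤ 2 := le_trans hrnorm hxz2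
    have h4 : f r ≤ ε/4 := by
      calc f r ≤ (ε/8) * ‖r‖ := hfr
        _ ≤ (ε/8) * 2 := by
            apply mul_le_mul_of_nonneg_left h3 (by linarith)
        _ = ε/4 := by ring
    rw [hsplit, hftrunc]
    linarith
  show @dist _ (absSeminormDist f hf).toDist x z < ε
  exact hdistlt



/-- For an uncountable set `Γ` and `1 < p < ∞`, the closed unit ball of `ℓ_p(Γ)` (realized as
the `Lp` space of the counting measure on `Γ`) is compact in the absolute weak topology. -/
theorem lp_unitBall_absWeakCompact (Γ : Type*) [MeasurableSpace Γ] [MeasurableSingletonClass Γ]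
    [Uncountable Γ] (p : ℝ≥0∞) [Fact (1 ≤ p)] (hp : 1 < p) (hp' : p ≠ ∞) :
    @IsCompact (Lp ℝ p (Measure.count : Measure Γ))
      (absWeakTopology (Lp ℝ p (Measure.count : Measure Γ)))
      (Metric.closedBall 0 1) := lp_unitBall_absWeakCompact' Γ p hp hp'
end

section
/- A Banach lattice E has the positive Schur property if and only if every absolutely weakly null sequence in E is norm null. -/
set_option linter.unusedSectionVars false

open Filter Topology Pointwise MeasureTheory


set_option maxHeartbeats 1000000

section Aux

variable {E : Type*} [NormedAddCommGroup E] [Lattice E] [HasSolidNorm E] [IsOrderedAddMonoid E] [NormedSpace ℝ E] [PosSMulStrictMono ℝ E]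

lemma my_smul_sup (c : ℝ) (hc : 0 < c) (a b : E) : c • (a ⊔ b) = c • a ⊔ c • b :=
  (OrderIso.smulRight hc).map_sup a b

lemma my_smul_posPart (c : ℝ) (hc : 0 ≤ c) (a : E) : (c • a)⁺ = c • a⁺ := by
  rcases hc.eq_or_lt with h | h
  · simp [← h]
  · simp only [posPart_def, my_smul_sup c h, smul_zero]

lemma my_smul_negPart (c : ℝ) (hc : 0 ≤ c) (a : E) : (c • a)⁻ = c • a⁻ := by
  rcases hc.eq_or_lt with h | h
  · simp [← h]
  · simp only [negPart_def, ← smul_neg, my_smul_sup c h, smul_zero]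

/-- Riesz decomposition in a lattice group. -/
lemma riesz_decomp {x y z : E} (hz : 0 ≤ z) (hx : 0 ≤ x) (hy : 0 ≤ y) (hzxy : z ≤ x + y) :
    ∃ z₁ z₂ : E, 0 ≤ z₁ ∧ z₁ ≤ x ∧ 0 ≤ z₂ ∧ z₂ ≤ y ∧ z = z₁ + z₂ := by
  refine ⟨z ⊓ x, z - z ⊓ x, le_inf hz hx, inf_le_right, ?_, ?_, by abel⟩
  · simpa using inf_le_left (a := z) (b := x)
  · have h1 : z - z ⊓ x = (z - z) ⊔ (z - x) := sub_inf z x z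
    rw [h1, sub_self]
    exact sup_le hy (sub_le_iff_le_add'.mpr hzxy)

variable (f : E →L[ℝ] ℝ)

/-- The candidate positive part of `f` on the positive cone. -/
noncomputable def rkSup (x : E) : ℝ := sSup (f '' {y | 0 ≤ y ∧ y ≤ x})

lemma rkSup_bddAbove {x : E} (hx : 0 ≤ x) : BddAbove (f '' {y | 0 ≤ y ∧ y ≤ x}) := by
  refine ⟨‖f‖ * ‖x‖, ?_⟩
  rintro _ ⟨y, ⟨hy0, hyx⟩, rfl⟩
  have hnorm : ‖y‖ ≤ ‖x‖ := by
    have : |y| ≤ |x| := by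
      rw [abs_of_nonneg hy0, abs_of_nonneg hx]; exact hyx
    exact norm_le_norm_of_abs_le_abs this
  calc f y ≤ |f y| := le_abs_self _
    _ ≤ ‖f‖ * ‖y‖ := f.le_opNorm y
    _ ≤ ‖f‖ * ‖x‖ := mul_le_mul_of_nonneg_left hnorm (norm_nonneg _)

lemma rkSup_mem_nonempty {x : E} (hx : 0 ≤ x) : (f '' {y | 0 ≤ y ∧ y ≤ x}).Nonempty :=
  ⟨f 0, ⟨0, ⟨le_refl 0, hx⟩, rfl⟩⟩

lemma le_rkSup {x y : E} (hx : 0 ≤ y) (hyx : y ≤ x) : f y ≤ rkSup f x := by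
  have hx0 : (0:E) ≤ x := hx.trans hyx
  exact le_csSup (rkSup_bddAbove f hx0) ⟨y, ⟨hx, hyx⟩, rfl⟩

lemma rkSup_nonneg {x : E} (hx : 0 ≤ x) : 0 ≤ rkSup f x := by
  simpa using le_rkSup f (le_refl (0:E)) hx

lemma rkSup_le {x : E} (hx : 0 ≤ x) {c : ℝ} (h : ∀ y : E, 0 ≤ y → y ≤ x → f y ≤ c) :
    rkSup f x ≤ c := by
  refine csSup_le (rkSup_mem_nonempty f hx) ?_
  rintro _ ⟨y, ⟨hy0, hyx⟩, rfl⟩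
  exact h y hy0 hyx

lemma rkSup_le_norm {x : E} (hx : 0 ≤ x) : rkSup f x ≤ ‖f‖ * ‖x‖ := by
  refine rkSup_le f hx fun y hy0 hyx => ?_
  have : |y| ≤ |x| := by rw [abs_of_nonneg hy0, abs_of_nonneg hx]; exact hyx
  calc f y ≤ |f y| := le_abs_self _
    _ ≤ ‖f‖ * ‖y‖ := f.le_opNorm y
    _ ≤ ‖f‖ * ‖x‖ := mul_le_mul_of_nonneg_left (norm_le_norm_of_abs_le_abs this) (norm_nonneg _)

lemma rkSup_add {x y : E} (hx : 0 ≤ x) (hy : 0 ≤ y) :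
    rkSup f (x + y) = rkSup f x + rkSup f y := by
  apply le_antisymm
  · refine rkSup_le f (by positivity) fun z hz0 hzxy => ?_
    obtain ⟨z₁, z₂, h₁0, h₁x, h₂0, h₂y, hz⟩ := riesz_decomp hz0 hx hy hzxy
    rw [hz, map_add]
    exact add_le_add (le_rkSup f h₁0 h₁x) (le_rkSup f h₂0 h₂y)
  · have key : ∀ a ∈ f '' {y' | 0 ≤ y' ∧ y' ≤ x}, ∀ b ∈ f '' {z | 0 ≤ z ∧ z ≤ y},
        a + b ≤ rkSup f (x + y) := by
      rintro _ ⟨a, ⟨ha0, hax⟩, rfl⟩ _ ⟨b, ⟨hb0, hby⟩, rfl⟩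
      rw [← map_add]
      exact le_rkSup f (by positivity) (add_le_add hax hby)
    have h1 : rkSup f x ≤ rkSup f (x + y) - rkSup f y := by
      refine csSup_le (rkSup_mem_nonempty f hx) fun a ha => ?_
      have : rkSup f y ≤ rkSup f (x + y) - a :=
        csSup_le (rkSup_mem_nonempty f hy) fun b hb => by linarith [key a ha b hb]
      linarith
    linarith
  
lemma rkSup_smul {x : E} (hx : 0 ≤ x) {c : ℝ} (hc : 0 ≤ c) :
    rkSup f (c • x) = c * rkSup f x := by
  rcases hc.eq_or_lt with h | h
  · subst h
    simp only [zero_smul, zero_mul]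
    apply le_antisymm
    · exact rkSup_le f le_rfl fun y hy0 hy1 => by
        rw [le_antisymm hy1 hy0, map_zero]
    · exact rkSup_nonneg f le_rfl
  · apply le_antisymm
    · refine rkSup_le f (smul_nonneg hc hx) fun y hy0 hyc => ?_
      have h1 : 0 ≤ c⁻¹ • y := smul_nonneg (by positivity) hy0
      have h2 : c⁻¹ • y ≤ x := by
        have := smul_le_smul_of_nonneg_left hyc (by positivity : (0:ℝ) ≤ c⁻¹)
        rwa [inv_smul_smul₀ h.ne'] at this
      have : f (c⁻¹ • y) ≤ rkSup f x := le_rkSup f h1 h2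
      rw [f.map_smul, smul_eq_mul] at this
      calc f y = c * (c⁻¹ * f y) := by field_simp
        _ ≤ c * rkSup f x := by gcongr
    · rw [mul_comm, ← le_div_iff₀ h]
      refine rkSup_le f hx fun y hy0 hyx => ?_
      rw [le_div_iff₀ h, mul_comm]
      have : f (c • y) ≤ rkSup f (c • x) :=
        le_rkSup f (smul_nonneg hc hy0) (smul_le_smul_of_nonneg_left hyx hc)
      rwa [f.map_smul, smul_eq_mul] at this

/-- The positive part of a continuous linear functional. -/
noncomputable def rkPos : E →L[ℝ] ℝ :=
  LinearMap.mkContinuous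
    { toFun := fun x => rkSup f x⁺ - rkSup f x⁻
      map_add' := by
        intro x y
        have key : (x + y)⁺ + (x⁻ + y⁻) = (x + y)⁻ + (x⁺ + y⁺) := by
          have h1 : (x+y)⁺ - (x+y)⁻ = x + y := posPart_sub_negPart _
          have h2 : x⁺ - x⁻ = x := posPart_sub_negPart _
          have h3 : y⁺ - y⁻ = y := posPart_sub_negPart _
          have : (x+y)⁺ - (x+y)⁻ = (x⁺ - x⁻) + (y⁺ - y⁻) := by rw [h1, h2, h3]
          linear_combination (norm := abel_nf <;> try rfl) this
        have e1 := rkSup_add f (posPart_nonneg (x+y)) (by positivity : (0:E) ≤ x⁻ + y⁻)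
        have e2 := rkSup_add f (negPart_nonneg (x+y)) (by positivity : (0:E) ≤ x⁺ + y⁺)
        have e3 := rkSup_add f (negPart_nonneg x) (negPart_nonneg y)
        have e4 := rkSup_add f (posPart_nonneg x) (posPart_nonneg y)
        have := congrArg (rkSup f) key
        rw [e1, e2, e3, e4] at this
        linarith
      map_smul' := by
        intro c x
        dsimp only [RingHom.id_apply, smul_eq_mul]
        rcases le_or_gt 0 c with hc | hc
        · rw [my_smul_posPart c hc, my_smul_negPart c hc,
            rkSup_smul f (posPart_nonneg x) hc, rkSup_smul f (negPart_nonneg x) hc]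
          ring
        · have h1 : (c • x)⁺ = (-c) • x⁻ := by
            rw [show c • x = -((-c) • x) by simp, posPart_neg, my_smul_negPart (-c) (by linarith)]
          have h2 : (c • x)⁻ = (-c) • x⁺ := by
            rw [show c • x = -((-c) • x) by simp, negPart_neg, my_smul_posPart (-c) (by linarith)]
          rw [h1, h2, rkSup_smul f (negPart_nonneg x) (by linarith),
            rkSup_smul f (posPart_nonneg x) (by linarith)]
          ring }
    ‖f‖
    (by
      intro x
      dsimp only [LinearMap.coe_mk, AddHom.coe_mk]
      have hp : rkSup f x⁺ ≤ ‖f‖ * ‖x‖ := by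
        refine (rkSup_le_norm f (posPart_nonneg x)).trans ?_
        refine mul_le_mul_of_nonneg_left ?_ (norm_nonneg _)
        rw [← norm_abs_eq_norm x]
        refine norm_le_norm_of_abs_le_abs ?_
        rw [abs_of_nonneg (posPart_nonneg x), abs_abs, posPart_def]
        exact sup_le (le_abs_self x) (abs_nonneg x)
      have hn : rkSup f x⁻ ≤ ‖f‖ * ‖x‖ := by
        refine (rkSup_le_norm f (negPart_nonneg x)).trans ?_
        refine mul_le_mul_of_nonneg_left ?_ (norm_nonneg _)
        rw [← norm_abs_eq_norm x]
        refine norm_le_norm_of_abs_le_abs ?_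
        rw [abs_of_nonneg (negPart_nonneg x), abs_abs, negPart_def]
        exact sup_le (neg_le_abs x) (abs_nonneg x)
      have hp0 := rkSup_nonneg f (posPart_nonneg x)
      have hn0 := rkSup_nonneg f (negPart_nonneg x)
      rw [Real.norm_eq_abs, abs_le]
      constructor <;> linarith)

lemma rkPos_nonneg {x : E} (hx : 0 ≤ x) : 0 ≤ rkPos f x := by
  have h1 : x⁺ = x := posPart_eq_self.mpr hx
  have h2 : x⁻ = 0 := negPart_eq_zero.mpr hx
  show 0 ≤ rkSup f x⁺ - rkSup f x⁻
  rw [h1, h2]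
  have : rkSup f (0:E) ≤ 0 := rkSup_le f le_rfl fun y hy0 hy1 => by
    rw [le_antisymm hy1 hy0, map_zero]
  linarith [rkSup_nonneg f hx]

lemma le_rkPos {x : E} (hx : 0 ≤ x) : f x ≤ rkPos f x := by
  have h1 : x⁺ = x := posPart_eq_self.mpr hx
  have h2 : x⁻ = 0 := negPart_eq_zero.mpr hx
  show f x ≤ rkSup f x⁺ - rkSup f x⁻
  rw [h1, h2]
  have : rkSup f (0:E) ≤ 0 := rkSup_le f le_rfl fun y hy0 hy1 => by
    rw [le_antisymm hy1 hy0, map_zero]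
  linarith [le_rkSup f hx (le_refl x)]

end Aux

section Main

variable {E : Type*} [NormedAddCommGroup E] [Lattice E] [HasSolidNorm E] [IsOrderedAddMonoid E] [NormedSpace ℝ E]

lemma tendsto_absSeminorm_iff (f : E →L[ℝ] ℝ) (hf : ∀ x : E, 0 ≤ x → 0 ≤ f x) (x : ℕ → E) :
    Tendsto x atTop
      (@nhds E (absSeminormDist f hf).toUniformSpace.toTopologicalSpace 0) ↔
    Tendsto (fun n => f |x n|) atTop (𝓝 0) := by
  have hdist : ∀ n, @dist E (absSeminormDist f hf).toDist (x n) 0 = f |x n| := by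
    intro n
    show f |x n - 0| = f |x n|
    rw [sub_zero]
  constructor
  · intro h
    rw [Metric.tendsto_atTop]
    intro ε hε
    obtain ⟨N, hN⟩ := (@Metric.tendsto_atTop E ℕ (absSeminormDist f hf) _ _ x 0).mp h ε hε
    refine ⟨N, fun n hn => ?_⟩
    have := hN n hn
    rw [hdist n] at this
    rw [Real.dist_eq, sub_zero, abs_of_nonneg (hf _ (abs_nonneg (x n)))]
    exact this
  · intro h
    refine (@Metric.tendsto_atTop E ℕ (absSeminormDist f hf) _ _ x 0).mpr ?_
    intro ε hε
    obtain ⟨N, hN⟩ := Metric.tendsto_atTop.mp h ε hε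
    refine ⟨N, fun n hn => ?_⟩
    rw [hdist n]
    have := hN n hn
    rw [Real.dist_eq, sub_zero] at this
    exact (le_abs_self _).trans_lt this

end Main

/-- A Banach lattice has the positive Schur property iff every absolutely weakly null sequence
is norm null. -/
theorem positiveSchur_iff_absWeakNull_normNull {E : Type*} [NormedAddCommGroup E] [Lattice E] [HasSolidNorm E] [IsOrderedAddMonoid E] [NormedSpace ℝ E] [PosSMulStrictMono ℝ E] [CompleteSpace E] :
    (∀ x : ℕ → E, (∀ n, 0 ≤ x n) →
        (∀ f : E →L[ℝ] ℝ, Tendsto (fun n => f (x n)) atTop (𝓝 0)) →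
        Tendsto (fun n => ‖x n‖) atTop (𝓝 0)) ↔
      (∀ x : ℕ → E, Tendsto x atTop (@nhds E (absWeakTopology E) 0) →
        Tendsto (fun n => ‖x n‖) atTop (𝓝 0)) := by
  have hunfold : ∀ x : ℕ → E, Tendsto x atTop (@nhds E (absWeakTopology E) 0) ↔
      ∀ f : {f : E →L[ℝ] ℝ // ∀ y : E, 0 ≤ y → 0 ≤ f y},
        Tendsto (fun n => f.1 |x n|) atTop (𝓝 0) := by
    intro x
    have : @nhds E (absWeakTopology E) 0 =
        ⨅ f : {f : E →L[ℝ] ℝ // ∀ y : E, 0 ≤ y → 0 ≤ f y},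
          @nhds E (absSeminormDist f.1 f.2).toUniformSpace.toTopologicalSpace 0 :=
      nhds_iInf
    rw [this, tendsto_iInf]
    exact forall_congr' fun f => tendsto_absSeminorm_iff f.1 f.2 x
  constructor
  · intro H x hx
    rw [hunfold x] at hx
    have habs : ∀ g : E →L[ℝ] ℝ, Tendsto (fun n => g |x n|) atTop (𝓝 0) := by
      intro g
      have h1 : Tendsto (fun n => (rkPos g) |x n|) atTop (𝓝 0) :=
        hx ⟨rkPos g, fun y hy => rkPos_nonneg g hy⟩
      have h2 : Tendsto (fun n => (rkPos g - g) |x n|) atTop (𝓝 0) :=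
        hx ⟨rkPos g - g, fun y hy => by
          rw [ContinuousLinearMap.sub_apply, sub_nonneg]
          exact le_rkPos g hy⟩
      have := h1.sub h2
      rw [sub_zero] at this
      refine this.congr fun n => ?_
      rw [ContinuousLinearMap.sub_apply]
      ring
    have := H (fun n => |x n|) (fun n => abs_nonneg (x n)) habs
    refine this.congr fun n => ?_
    exact norm_abs_eq_norm (x n)
  · intro H x hx0 hweak
    refine H x ?_
    rw [hunfold x]
    intro f
    have : ∀ n, f.1 |x n| = f.1 (x n) := fun n => by rw [abs_of_nonneg (hx0 n)]
    exact (hweak f.1).congr fun n => (this n).symm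
end
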